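/- arXiv:2005.11651 — 11 statements merged into one kernel-verified Lean document; each statement's English description precedes it below -/
import Mathlib

section
/- Let d ≥ 1 and ε₁ > ε₂ > ⋯ > ε_d > 0, and set z_j = 1/(e^{ε_j}+1) for j ∈ [d]. Define q₁ = z₁ and q_j = (z_j − z_{j−1})/(1 − 2z_{j−1}) for 2 ≤ j ≤ d. If U₁,…,U_d are independent Bernoulli random variables with Pr[U_i = 1] = q_i, then for every j ∈ [d] the XOR U₁ ⊕ U₂ ⊕ ⋯ ⊕ U_j is a Bernoulli random variable with Pr[U₁ ⊕ ⋯ ⊕ U_j = 1] = z_j = 1/(e^{ε_j}+1). -/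
open Finset

open scoped Classical in
/-- **Lemma 4.1 of the paper (key computation):** with `U₁,…,U_d` independent Bernoulli
random variables (modeled by the product measure on `Fin d → Bool`) with
`Pr[U_i = 1] = q_i`, where `q₁ = z₁` and `q_j = (z_j − z_{j−1})/(1 − 2 z_{j−1})`,
the XOR `U₁ ⊕ ⋯ ⊕ U_j` is Bernoulli with success probability `z_j = 1/(e^{ε_j}+1)`. -/
theorem stmt6 (d : ℕ) (hd : 1 ≤ d) (ε : Fin d → ℝ)
    (hεpos : ∀ j, 0 < ε j)
    (hεdec : ∀ i j : Fin d, i < j → ε j < ε i)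
    (z q : Fin d → ℝ)
    (hz : ∀ j, z j = 1 / (Real.exp (ε j) + 1))
    (hq0 : ∀ j : Fin d, j.val = 0 → q j = z j)
    (hqs : ∀ j : Fin d, 0 < j.val →
      q j = (z j - z ⟨j.val - 1, lt_of_le_of_lt (Nat.sub_le _ _) j.isLt⟩) /
        (1 - 2 * z ⟨j.val - 1, lt_of_le_of_lt (Nat.sub_le _ _) j.isLt⟩)) :
    ∀ j : Fin d,
      ∑ u ∈ Finset.univ.filter (fun u : Fin d → Bool =>
          Odd (Finset.univ.filter (fun i : Fin d => i ≤ j ∧ u i = true)).card),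
        ∏ i : Fin d, (if u i then q i else 1 - q i) = z j := by
  -- 1 - 2 z i ≠ 0
  have hz2 : ∀ i : Fin d, (1 : ℝ) - 2 * z i ≠ 0 := by
    intro i
    have hE : (1:ℝ) < Real.exp (ε i) := by
      have := hεpos i
      have h := Real.exp_lt_exp.mpr this
      simpa using h
    have hpos : (0:ℝ) < Real.exp (ε i) + 1 := by positivity
    rw [hz i]
    have heq : (1:ℝ) - 2 * (1 / (Real.exp (ε i) + 1))
        = (Real.exp (ε i) - 1) / (Real.exp (ε i) + 1) := by
      field_simp
      ring
    rw [heq]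
    exact div_ne_zero (by linarith) (ne_of_gt hpos)
  -- factorization lemma
  have hfact : ∀ f : Fin d → Bool → ℝ,
      ∑ u : Fin d → Bool, ∏ i, f i (u i) = ∏ i, (f i true + f i false) := by
    intro f
    calc ∑ u : Fin d → Bool, ∏ i, f i (u i)
        = ∑ u ∈ Fintype.piFinset (fun _ : Fin d => (univ : Finset Bool)),
            ∏ i, f i (u i) := by rw [Fintype.piFinset_univ]
      _ = ∏ i, ∑ b : Bool, f i b := (Finset.prod_univ_sum _ _).symm
      _ = ∏ i, (f i true + f i false) := by simp
  -- key product identity, by induction on j.val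
  have key : ∀ k : ℕ, ∀ j : Fin d, j.val = k →
      ∏ i ∈ univ.filter (fun i : Fin d => i ≤ j), (1 - 2 * q i) = 1 - 2 * z j := by
    intro k
    induction k with
    | zero =>
      intro j hk
      have hset : univ.filter (fun i : Fin d => i ≤ j) = {j} := by
        ext i
        simp only [mem_filter, mem_univ, true_and, mem_singleton, Fin.le_def, Fin.ext_iff, hk]
        omega
      rw [hset, Finset.prod_singleton, hq0 j hk]
    | succ k ih =>
      intro j hk
      have hkd : k < d := by omega
      set j' : Fin d := ⟨k, hkd⟩ with hj'
      have hset : univ.filter (fun i : Fin d => i ≤ j)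
          = insert j (univ.filter (fun i : Fin d => i ≤ j')) := by
        ext i
        simp only [mem_filter, mem_univ, true_and, mem_insert, Fin.le_def, Fin.ext_iff, hk, hj']
        omega
      have hnot : j ∉ univ.filter (fun i : Fin d => i ≤ j') := by
        simp only [mem_filter, mem_univ, true_and, Fin.le_def, hk, hj']
        omega
      rw [hset, Finset.prod_insert hnot, ih j' rfl]
      have hq := hqs j (by omega)
      have hidx : (⟨j.val - 1, lt_of_le_of_lt (Nat.sub_le _ _) j.isLt⟩ : Fin d) = j' := by
        apply Fin.ext; simp [hk, hj']
      rw [hidx] at hq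
      rw [hq]
      have h0 := hz2 j'
      field_simp
      ring
  intro j
  -- total sum is 1
  have hA : ∑ u : Fin d → Bool, ∏ i, (if u i then q i else 1 - q i) = 1 := by
    rw [hfact (fun i b => if b then q i else 1 - q i)]
    exact Finset.prod_eq_one fun i _ => by simp
  -- signed sum
  have hsign : ∀ u : Fin d → Bool,
      ((-1:ℝ)) ^ (univ.filter (fun i : Fin d => i ≤ j ∧ u i = true)).card
        = ∏ i : Fin d, (if i ≤ j ∧ u i = true then (-1:ℝ) else 1) := by
    intro u
    rw [← Finset.prod_filter]
    simp [Finset.prod_const]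
  have hB : ∑ u : Fin d → Bool,
      (∏ i, (if u i then q i else 1 - q i)) *
        (-1:ℝ) ^ (univ.filter (fun i : Fin d => i ≤ j ∧ u i = true)).card
      = 1 - 2 * z j := by
    have hrw : ∀ u : Fin d → Bool,
        (∏ i, (if u i then q i else 1 - q i)) *
          (-1:ℝ) ^ (univ.filter (fun i : Fin d => i ≤ j ∧ u i = true)).card
        = ∏ i, ((fun (i : Fin d) (b : Bool) =>
            (if b then q i else 1 - q i) * (if i ≤ j ∧ b = true then (-1:ℝ) else 1)) i (u i)) := by
      intro u
      rw [hsign u, ← Finset.prod_mul_distrib]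
    simp_rw [hrw]
    have hf := hfact (fun (i : Fin d) (b : Bool) =>
      (if b then q i else 1 - q i) * (if i ≤ j ∧ b = true then (-1:ℝ) else 1))
    simp only at hf
    rw [hf, ← key j.val j rfl, Finset.prod_filter]
    apply Finset.prod_congr rfl
    intro i _
    by_cases h : i ≤ j <;> simp [h] <;> ring
  -- combine
  have hsplit :
      (∑ u : Fin d → Bool, ∏ i, (if u i then q i else 1 - q i))
        - (∑ u : Fin d → Bool,
            (∏ i, (if u i then q i else 1 - q i)) *
              (-1:ℝ) ^ (univ.filter (fun i : Fin d => i ≤ j ∧ u i = true)).card)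
      = 2 * ∑ u ∈ univ.filter (fun u : Fin d → Bool =>
          Odd (univ.filter (fun i : Fin d => i ≤ j ∧ u i = true)).card),
          ∏ i, (if u i then q i else 1 - q i) := by
    rw [← Finset.sum_sub_distrib]
    rw [← Finset.sum_filter_add_sum_filter_not univ (fun u : Fin d → Bool =>
        Odd (univ.filter (fun i : Fin d => i ≤ j ∧ u i = true)).card)]
    have e1 : ∑ u ∈ univ.filter (fun u : Fin d → Bool =>
          Odd (univ.filter (fun i : Fin d => i ≤ j ∧ u i = true)).card),
        ((∏ i, (if u i then q i else 1 - q i))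
          - (∏ i, (if u i then q i else 1 - q i)) *
              (-1:ℝ) ^ (univ.filter (fun i : Fin d => i ≤ j ∧ u i = true)).card)
        = ∑ u ∈ univ.filter (fun u : Fin d → Bool =>
          Odd (univ.filter (fun i : Fin d => i ≤ j ∧ u i = true)).card),
          2 * ∏ i, (if u i then q i else 1 - q i) := by
      apply Finset.sum_congr rfl
      intro u hu
      have hodd := (Finset.mem_filter.mp hu).2
      rw [hodd.neg_one_pow]
      ring
    have e2 : ∑ u ∈ univ.filter (fun u : Fin d → Bool =>
          ¬ Odd (univ.filter (fun i : Fin d => i ≤ j ∧ u i = true)).card),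
        ((∏ i, (if u i then q i else 1 - q i))
          - (∏ i, (if u i then q i else 1 - q i)) *
              (-1:ℝ) ^ (univ.filter (fun i : Fin d => i ≤ j ∧ u i = true)).card)
        = 0 := by
      apply Finset.sum_eq_zero
      intro u hu
      have hnodd := (Finset.mem_filter.mp hu).2
      rw [(Nat.not_odd_iff_even.mp hnodd).neg_one_pow]
      ring
    rw [e1, e2, add_zero, Finset.mul_sum]
  rw [hA, hB] at hsplit
  linarith
end

section
/- Let X, U, Y be finite sets, let q be a probability distribution on U with q(u) > 0 for all u ∈ U, and let f : X × U → Y be a deterministic map such that (i) the induced kernel Q(y|x) = ∑_{u : f(x,u)=y} q(u) satisfies Q(y|x) ≤ e^ε Q(y|x′) for all x, x′ ∈ X and y ∈ Y for some finite ε ≥ 0, and (ii) for every u ∈ U the map x ↦ f(x,u) is injective (so that X is recoverable from (Y,U)). Then |X| ≤ |f(X × U)| ≤ |U|; in particular, if every element of Y is attained by f then |U| ≥ |Y| ≥ |X|. -/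
open Finset

/-- `q` is a probability distribution on the finite type `S`. -/
def IsDist {S : Type*} [Fintype S] (q : S → ℝ) : Prop :=
  (∀ s, 0 ≤ q s) ∧ ∑ s, q s = 1

/-- **First necessary condition of Theorem 4 of the paper:** for an `ε`-LDP-Rec
mechanism (deterministic map `f : X × U → Y` with full-support key distribution `q`,
`ε`-LDP induced kernel, and input recoverable from output and key),
`|X| ≤ |f(X × U)| ≤ |U|`; in particular if `f` is onto `Y` then `|U| ≥ |Y| ≥ |X|`. -/
theorem stmt8 (X U Y : Type*) [Fintype X] [Fintype U] [Fintype Y] [DecidableEq Y]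
    (ε : ℝ) (hε : 0 ≤ ε)
    (q : U → ℝ) (hq : IsDist q) (hqpos : ∀ u, 0 < q u)
    (f : X → U → Y)
    (hLDP : ∀ x x' y, (∑ u ∈ Finset.univ.filter (fun u => f x u = y), q u) ≤
      Real.exp ε * ∑ u ∈ Finset.univ.filter (fun u => f x' u = y), q u)
    (hrec : ∀ u, Function.Injective (fun x => f x u)) :
    Fintype.card X ≤ (Finset.image (fun p : X × U => f p.1 p.2) Finset.univ).card ∧
    (Finset.image (fun p : X × U => f p.1 p.2) Finset.univ).card ≤ Fintype.card U ∧
    (Function.Surjective (fun p : X × U => f p.1 p.2) →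
      Fintype.card X ≤ Fintype.card Y ∧ Fintype.card Y ≤ Fintype.card U) := by
  classical
  set T : Finset Y := Finset.image (fun p : X × U => f p.1 p.2) Finset.univ with hT
  -- U is nonempty
  have hUne : Nonempty U := by
    by_contra h
    rw [not_nonempty_iff] at h
    have := hq.2
    simp [Finset.univ_eq_empty] at this
  -- Part 1: card X ≤ T.card
  have h1 : Fintype.card X ≤ T.card := by
    obtain ⟨u₀⟩ := hUne
    have hinj := hrec u₀
    have hsub : Finset.image (fun x => f x u₀) Finset.univ ⊆ T := by
      intro y hy
      rw [Finset.mem_image] at hy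
      obtain ⟨x, _, hx⟩ := hy
      rw [hT]
      exact Finset.mem_image.2 ⟨(x, u₀), Finset.mem_univ _, hx⟩
    calc Fintype.card X = (Finset.image (fun x => f x u₀) Finset.univ).card := by
          rw [Finset.card_image_of_injective _ hinj, Finset.card_univ]
      _ ≤ T.card := Finset.card_le_card hsub
  -- Part 2: T.card ≤ card U
  have h2 : T.card ≤ Fintype.card U := by
    by_cases hX : Nonempty X
    · obtain ⟨x₀⟩ := hX
      have hex : ∀ y ∈ T, ∃ u, f x₀ u = y := by
        intro y hy
        simp only [hT, Finset.mem_image] at hy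
        obtain ⟨⟨x, u⟩, _, hxu⟩ := hy
        -- Q(y|x) ≥ q u > 0
        have hpos : 0 < ∑ v ∈ Finset.univ.filter (fun v => f x v = y), q v := by
          apply Finset.sum_pos'
          · intro v _; exact (hqpos v).le
          · exact ⟨u, Finset.mem_filter.2 ⟨Finset.mem_univ _, hxu⟩, hqpos u⟩
        have hle := hLDP x x₀ y
        have hpos₀ : 0 < ∑ v ∈ Finset.univ.filter (fun v => f x₀ v = y), q v := by
          by_contra hcon
          push_neg at hcon
          have : Real.exp ε * ∑ v ∈ Finset.univ.filter (fun v => f x₀ v = y), q v ≤ 0 :=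
            mul_nonpos_of_nonneg_of_nonpos (Real.exp_pos ε).le hcon
          linarith
        rcases Finset.exists_ne_zero_of_sum_ne_zero hpos₀.ne' with ⟨u', hu', _⟩
        exact ⟨u', (Finset.mem_filter.1 hu').2⟩
      have : T.card ≤ (Finset.univ : Finset U).card := by
        apply Finset.card_le_card_of_injOn
          (fun y => if h : ∃ u, f x₀ u = y then h.choose else Classical.arbitrary U)
        · intro y _; exact Finset.mem_univ _
        · intro y hy y' hy' hgy
          have h₁ := hex y hy
          have h₂ := hex y' hy'
          simp only [dif_pos h₁, dif_pos h₂] at hgy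
          rw [← h₁.choose_spec, ← h₂.choose_spec, hgy]
      simpa [Finset.card_univ] using this
    · rw [not_nonempty_iff] at hX
      have : T = ∅ := by
        rw [hT, Finset.eq_empty_iff_forall_notMem]
        intro y hy
        simp only [Finset.mem_image] at hy
        obtain ⟨⟨x, u⟩, _, _⟩ := hy
        exact hX.elim x
      simp [this]
  refine ⟨h1, h2, fun hsurj => ?_⟩
  have hTuniv : T = Finset.univ := by
    rw [Finset.eq_univ_iff_forall]
    intro y
    obtain ⟨p, hp⟩ := hsurj y
    exact Finset.mem_image.2 ⟨p, Finset.mem_univ _, hp⟩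
  rw [hTuniv, Finset.card_univ] at h1 h2
  exact ⟨h1, h2⟩
end

section
/- Let k ≥ 1 and ε ≥ 0. Let X, U, Y be finite sets with |X| = |U| = |Y| = k, let q be a probability distribution on U with q(u) > 0 for all u, and let f : X × U → Y be a deterministic map such that (i) the induced kernel Q(y|x) = ∑_{u : f(x,u)=y} q(u) satisfies Q(y|x) ≤ e^ε Q(y|x′) for all x, x′ ∈ X and y ∈ Y, and (ii) f(·,u) is injective for every u ∈ U. Then max_{u ∈ U} q(u) ≤ e^ε · min_{u ∈ U} q(u). -/
open Finset

/-- **Appendix F.2 claim of the paper:** for an `ε`-LDP-Rec mechanism with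
`|X| = |U| = |Y| = k`, the largest key probability is at most `e^ε` times the smallest
one (stated as `q u ≤ e^ε q u'` for all keys `u, u'`). -/
theorem stmt9 (k : ℕ) (hk : 1 ≤ k) (ε : ℝ) (hε : 0 ≤ ε)
    (X U Y : Type*) [Fintype X] [Fintype U] [Fintype Y] [DecidableEq Y]
    (hX : Fintype.card X = k) (hU : Fintype.card U = k) (hY : Fintype.card Y = k)
    (q : U → ℝ) (hq : IsDist q) (hqpos : ∀ u, 0 < q u)
    (f : X → U → Y)
    (hLDP : ∀ x x' y, (∑ u ∈ Finset.univ.filter (fun u => f x u = y), q u) ≤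
      Real.exp ε * ∑ u ∈ Finset.univ.filter (fun u => f x' u = y), q u)
    (hrec : ∀ u, Function.Injective (fun x => f x u)) :
    ∀ u u' : U, q u ≤ Real.exp ε * q u' := by
  have hXne : Nonempty X := Fintype.card_pos_iff.mp (by omega)
  have hUne : Nonempty U := Fintype.card_pos_iff.mp (by omega)
  -- f(·,u) is bijective for every u
  have hbij : ∀ u, Function.Bijective (fun x => f x u) := by
    intro u
    exact (Fintype.bijective_iff_injective_and_card _).mpr ⟨hrec u, by omega⟩
  -- every fiber of f x is nonempty, i.e. f x is surjective
  have hsurj : ∀ x, Function.Surjective (f x) := by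
    intro x y
    obtain ⟨u0⟩ := hUne
    obtain ⟨x0, hx0⟩ := (hbij u0).2 y
    have h1 : q u0 ≤ ∑ u ∈ Finset.univ.filter (fun u => f x0 u = y), q u := by
      apply Finset.single_le_sum (fun u _ => (hqpos u).le)
      simp [hx0]
    have h2 := hLDP x0 x y
    have hpos : 0 < ∑ u ∈ Finset.univ.filter (fun u => f x u = y), q u := by
      by_contra h
      push_neg at h
      have hz : (∑ u ∈ Finset.univ.filter (fun u => f x u = y), q u) = 0 :=
        le_antisymm h (Finset.sum_nonneg fun u _ => (hqpos u).le)
      rw [hz, mul_zero] at h2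
      exact absurd (lt_of_lt_of_le (hqpos u0) h1) (not_lt.mpr h2)
    obtain ⟨u, hu, _⟩ := Finset.exists_ne_zero_of_sum_ne_zero hpos.ne'
    exact ⟨u, (Finset.mem_filter.mp hu).2⟩
  -- hence f x is injective
  have hinj : ∀ x, Function.Injective (f x) := fun x =>
    ((Fintype.bijective_iff_surjective_and_card _).mpr ⟨hsurj x, by omega⟩).1
  intro u u'
  obtain ⟨x⟩ := hXne
  set y := f x u with hy
  obtain ⟨x', hx'⟩ := (hbij u').2 y
  have h1 : q u ≤ ∑ v ∈ Finset.univ.filter (fun v => f x v = y), q v := by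
    apply Finset.single_le_sum (fun v _ => (hqpos v).le)
    simp [hy]
  have h2 : (∑ v ∈ Finset.univ.filter (fun v => f x' v = y), q v) = q u' := by
    have : Finset.univ.filter (fun v => f x' v = y) = {u'} := by
      ext v
      simp only [Finset.mem_filter, Finset.mem_univ, true_and, Finset.mem_singleton]
      constructor
      · intro hv
        exact hinj x' (hv.trans hx'.symm)
      · intro hv; rw [hv]; exact hx'
    rw [this, Finset.sum_singleton]
  calc q u ≤ _ := h1
    _ ≤ Real.exp ε * ∑ v ∈ Finset.univ.filter (fun v => f x' v = y), q v := hLDP x x' y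
    _ = Real.exp ε * q u' := by rw [h2]
end

section
/- Let k ≥ 2 and ε > 0, and set l = k(e^ε(ε−1)+1)/(e^ε−1)². For an integer s ∈ [0,k], let q^s be the probability distribution on [k] whose first k−s entries equal 1/(s e^ε + k − s) and whose last s entries equal e^ε/(s e^ε + k − s). Then for every probability distribution q on [k] satisfying max_j q(j) ≤ e^ε · min_j q(j), the Shannon entropy satisfies H(q) ≥ min_{s ∈ {⌈l⌉, ⌊l⌋}} H(q^s). -/
open Finset

/-- Shannon entropy of a function on a finite type (natural log, `0 log 0 = 0`). -/
noncomputable def Hent {S : Type*} [Fintype S] (q : S → ℝ) : ℝ :=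
  -∑ s, q s * Real.log (q s)

/-- The distribution `q^s` on `[k]`: the first `k − s` entries are `1/(s e^ε + k − s)`
and the remaining `s` entries are `e^ε/(s e^ε + k − s)`. -/
noncomputable def keyDist (k s : ℕ) (ε : ℝ) : Fin k → ℝ := fun j =>
  if (j : ℕ) < k - s then 1 / ((s : ℝ) * Real.exp ε + ((k - s : ℕ) : ℝ))
  else Real.exp ε / ((s : ℝ) * Real.exp ε + ((k - s : ℕ) : ℝ))

/-- Superadditivity of a convex function vanishing at 0. -/
lemma aux_superadd {f : ℝ → ℝ} {M a b : ℝ} (hf : ConvexOn ℝ (Set.Icc 0 M) f)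
    (hf0 : f 0 = 0) (ha : 0 ≤ a) (hb : 0 ≤ b) (hab : a + b ≤ M) :
    f a + f b ≤ f (a + b) := by
  rcases eq_or_lt_of_le (by linarith : (0:ℝ) ≤ a + b) with h | h
  · have ha0 : a = 0 := by linarith
    have hb0 : b = 0 := by linarith
    simp [ha0, hb0, hf0]
  · have h0 : (0:ℝ) ∈ Set.Icc (0:ℝ) M := ⟨le_refl _, by linarith⟩
    have hs : a + b ∈ Set.Icc (0:ℝ) M := ⟨le_of_lt h, hab⟩
    have h1 := hf.2 h0 hs (by positivity : (0:ℝ) ≤ b / (a+b))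
      (by positivity : (0:ℝ) ≤ a/(a+b)) (by field_simp; try ring)
    have h2 := hf.2 h0 hs (by positivity : (0:ℝ) ≤ a / (a+b))
      (by positivity : (0:ℝ) ≤ b/(a+b)) (by field_simp; try ring)
    simp only [smul_eq_mul, mul_zero, zero_add, hf0] at h1 h2
    have e1 : a / (a+b) * (a+b) = a := by field_simp
    have e2 : b / (a+b) * (a+b) = b := by field_simp
    rw [e1] at h1
    rw [e2] at h2
    have e3 : a/(a+b) * f (a+b) + b/(a+b) * f (a+b) = f (a+b) := by
      rw [← add_mul]; field_simp
    linarith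

lemma aux_range2 (K : ℕ) (x z : ℝ) :
    ∀ k, K ≤ k → ∑ i ∈ Finset.range k, (if i < K then x else z)
      = K * x + ((k - K : ℕ) : ℝ) * z := by
  refine Nat.le_induction ?_ ?_
  · have hc : ∀ i ∈ Finset.range K, (if i < K then x else z) = x :=
      fun i hi => if_pos (Finset.mem_range.1 hi)
    rw [Finset.sum_congr rfl hc, Finset.sum_const, Finset.card_range]
    simp
  · intro k hk ih
    rw [Finset.sum_range_succ, ih, if_neg (by omega)]
    have : k + 1 - K = (k - K) + 1 := by omega
    rw [this]
    push_cast
    ring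

lemma aux_sum_pattern2 (k K : ℕ) (hK : K ≤ k) (x z : ℝ) :
    ∑ j : Fin k, (if (j : ℕ) < K then x else z) = K * x + ((k - K : ℕ) : ℝ) * z := by
  rw [Fin.sum_univ_eq_sum_range (fun i => if i < K then x else z) k]
  exact aux_range2 K x z k hK

lemma aux_range3 (K : ℕ) (x y z : ℝ) :
    ∀ k, K + 1 ≤ k → ∑ i ∈ Finset.range k, (if i < K then x else if i = K then y else z)
      = K * x + y + ((k - K - 1 : ℕ) : ℝ) * z := by
  refine Nat.le_induction ?_ ?_
  · have hc : ∀ i ∈ Finset.range K, (if i < K then x else if i = K then y else z) = x :=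
      fun i hi => if_pos (Finset.mem_range.1 hi)
    rw [Finset.sum_range_succ, Finset.sum_congr rfl hc, Finset.sum_const,
      Finset.card_range, if_neg (by omega), if_pos rfl]
    simp
  · intro k hk ih
    rw [Finset.sum_range_succ, ih, if_neg (by omega), if_neg (by omega)]
    have : k + 1 - K - 1 = (k - K - 1) + 1 := by omega
    rw [this]
    push_cast
    ring

lemma aux_sum_pattern3 (k K : ℕ) (hK : K < k) (x y z : ℝ) :
    ∑ j : Fin k, (if (j : ℕ) < K then x else if (j : ℕ) = K then y else z)
      = K * x + y + ((k - K - 1 : ℕ) : ℝ) * z := by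
  rw [Fin.sum_univ_eq_sum_range (fun i => if i < K then x else if i = K then y else z) k]
  exact aux_range3 K x y z k hK

/-- Entropy of a distribution of the form `μ(1 + cτ)`. -/
lemma aux_Hent_eq {k : ℕ} (c μ : ℝ) (hμ : 0 < μ) (τ : Fin k → ℝ)
    (hτ : ∀ j, 0 < 1 + c * τ j)
    (hsum : ∑ j, μ * (1 + c * τ j) = 1) :
    Hent (fun j => μ * (1 + c * τ j)) =
      -Real.log μ - μ * ∑ j, (1 + c * τ j) * Real.log (1 + c * τ j) := by
  unfold Hent
  have hc : ∀ j : Fin k, μ * (1 + c * τ j) * Real.log (μ * (1 + c * τ j))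
      = μ * (1 + c * τ j) * Real.log μ + μ * ((1 + c * τ j) * Real.log (1 + c * τ j)) := by
    intro j
    rw [Real.log_mul hμ.ne' (hτ j).ne']
    ring
  rw [Finset.sum_congr rfl (fun j _ => hc j), Finset.sum_add_distrib, ← Finset.sum_mul,
    hsum, ← Finset.mul_sum]
  ring

set_option maxHeartbeats 1000000

/-- **Core of the second necessary condition of Theorem 4 of the paper:** every
distribution on `[k]` with pairwise probability ratios at most `e^ε` has entropy at least
`min_{s ∈ {⌈l⌉,⌊l⌋}} H(q^s)` where `l = k(e^ε(ε−1)+1)/(e^ε−1)²`. -/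
theorem stmt10 (k : ℕ) (hk : 2 ≤ k) (ε : ℝ) (hε : 0 < ε)
    (l : ℝ) (hl : l = (k : ℝ) * (Real.exp ε * (ε - 1) + 1) / (Real.exp ε - 1) ^ 2)
    (q : Fin k → ℝ) (hq : IsDist q)
    (hratio : ∀ i j : Fin k, q i ≤ Real.exp ε * q j) :
    min (Hent (keyDist k ⌈l⌉₊ ε)) (Hent (keyDist k ⌊l⌋₊ ε)) ≤ Hent q := by
  classical
  set E := Real.exp ε with hE
  have hE1 : 1 < E := Real.one_lt_exp_iff.mpr hε
  have hE0 : 0 < E := lt_trans one_pos hE1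
  set c : ℝ := E - 1 with hcdef
  have hc : 0 < c := by simp only [hcdef]; linarith
  have hlε : Real.log E = ε := Real.log_exp ε
  have hk0 : (0:ℝ) < k := by exact_mod_cast lt_of_lt_of_le two_pos hk
  -- minimum entry
  have hne : (Finset.univ : Finset (Fin k)).Nonempty :=
    ⟨⟨0, by omega⟩, Finset.mem_univ _⟩
  set m := Finset.univ.inf' hne q with hmdef
  have hmle : ∀ j, m ≤ q j := fun j => Finset.inf'_le _ (Finset.mem_univ j)
  obtain ⟨i0, -, hi0⟩ := Finset.exists_mem_eq_inf' hne q
  have hm0 : 0 < m := by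
    by_contra hcon
    push_neg at hcon
    have hall : ∀ j, q j ≤ 0 := by
      intro j
      have h1 := hratio j i0
      have : m = q i0 := hi0
      nlinarith
    have : (1:ℝ) ≤ 0 := by
      rw [← hq.2]
      exact Finset.sum_nonpos fun j _ => hall j
    linarith
  -- normalized coordinates
  set t : Fin k → ℝ := fun j => (q j - m) / (c * m) with htdef
  have hqt : ∀ j, q j = m * (1 + c * t j) := by
    intro j
    simp only [htdef]
    field_simp
    ring
  have ht0 : ∀ j, 0 ≤ t j := by
    intro j
    apply div_nonneg (by linarith [hmle j]) (by positivity)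
  have ht1 : ∀ j, t j ≤ 1 := by
    intro j
    rw [div_le_one (by positivity)]
    have h1 := hratio j i0
    rw [← hi0] at h1
    simp only [hcdef]
    nlinarith
  set T := ∑ j, t j with hTdef
  have hT0 : 0 ≤ T := Finset.sum_nonneg fun j _ => ht0 j
  have hTk : T ≤ k := by
    have := Finset.sum_le_sum (fun j (_ : j ∈ Finset.univ) => ht1 j)
    simpa [Finset.card_univ] using this
  have hTsum : m * ((k:ℝ) + c * T) = 1 := by
    have h1 : ∑ j, q j = 1 := hq.2
    have h2 : ∑ j, q j = ∑ j, m * (1 + c * t j) :=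
      Finset.sum_congr rfl fun j _ => hqt j
    have h3 : ∑ j, m * (1 + c * t j) = m * ((k:ℝ) + c * T) := by
      simp only [mul_add, mul_one, Finset.sum_add_distrib, Finset.sum_const,
        Finset.card_univ, Fintype.card_fin, nsmul_eq_mul, hTdef, ← Finset.mul_sum]
      ring
    rw [← h3, ← h2, h1]
  -- the function φ
  set φ : ℝ → ℝ := fun u => (1 + c * u) * Real.log (1 + c * u) with hφdef
  have hφ0 : φ 0 = 0 := by simp [hφdef]
  have hφ1 : φ 1 = ε * E := by
    have h1 : 1 + c * 1 = E := by simp [hcdef]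
    simp only [hφdef, h1, hlε]
    ring
  have hφpos : ∀ u, 0 ≤ u → 0 < 1 + c * u := fun u hu => by nlinarith
  have hφconv : ConvexOn ℝ (Set.Icc 0 1) φ := by
    constructor
    · exact convex_Icc 0 1
    · intro x hx y hy a b ha hb hab
      have hX : (1:ℝ) + c * x ∈ Set.Ici (0:ℝ) := Set.mem_Ici.2 (by nlinarith [hx.1])
      have hY : (1:ℝ) + c * y ∈ Set.Ici (0:ℝ) := Set.mem_Ici.2 (by nlinarith [hy.1])
      have h := Real.convexOn_mul_log.2 hX hY ha hb hab
      simp only [smul_eq_mul] at h ⊢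
      have e : 1 + c * (a * x + b * y) = a * (1 + c * x) + b * (1 + c * y) := by
        linear_combination -hab
      simp only [hφdef]
      rw [e]
      exact h
  -- pairing inequalities
  have pairA : ∀ a b : ℝ, 0 ≤ a → 0 ≤ b → a + b ≤ 1 → φ a + φ b ≤ φ (a + b) :=
    fun a b ha hb hab => aux_superadd hφconv hφ0 ha hb hab
  have hψconv : ConvexOn ℝ (Set.Icc 0 1) (fun x => φ (1 - x) - φ 1) := by
    constructor
    · exact convex_Icc 0 1
    · intro x hx y hy a b ha hb hab
      have hx' : (1:ℝ) - x ∈ Set.Icc (0:ℝ) 1 := ⟨by linarith [hx.2], by linarith [hx.1]⟩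
      have hy' : (1:ℝ) - y ∈ Set.Icc (0:ℝ) 1 := ⟨by linarith [hy.2], by linarith [hy.1]⟩
      have h := hφconv.2 hx' hy' ha hb hab
      simp only [smul_eq_mul] at h ⊢
      have e : 1 - (a * x + b * y) = a * (1 - x) + b * (1 - y) := by
        linear_combination -hab
      rw [e]
      have e2 : a * φ 1 + b * φ 1 = φ 1 := by rw [← add_mul, hab, one_mul]
      linarith
  have pairB : ∀ a b : ℝ, a ≤ 1 → b ≤ 1 → 1 ≤ a + b →
      φ a + φ b ≤ φ 1 + φ (a + b - 1) := by
    intro a b ha hb hab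
    have h := aux_superadd hψconv (by simp) (by linarith : (0:ℝ) ≤ 1 - a)
      (by linarith : (0:ℝ) ≤ 1 - b) (by linarith : (1 - a) + (1 - b) ≤ 1)
    have e1 : 1 - (1 - a) = a := by ring
    have e2 : 1 - (1 - b) = b := by ring
    have e3 : 1 - ((1 - a) + (1 - b)) = a + b - 1 := by ring
    rw [e1, e2, e3] at h
    linarith
  -- rearrangement
  have key : ∀ s : Finset (Fin k), ∃ n : ℕ, ∃ θ : ℝ, 0 ≤ θ ∧ θ ≤ 1 ∧
      (n : ℝ) + θ = ∑ j ∈ s, t j ∧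
      ∑ j ∈ s, φ (t j) ≤ (n : ℝ) * φ 1 + φ θ := by
    intro s
    induction s using Finset.induction_on with
    | empty => exact ⟨0, 0, le_refl _, zero_le_one, by simp, by simp [hφ0]⟩
    | @insert a s hanot ih =>
      obtain ⟨n, θ, hθ0, hθ1, hsum, hb⟩ := ih
      rw [Finset.sum_insert hanot, Finset.sum_insert hanot]
      by_cases hcase : θ + t a ≤ 1
      · refine ⟨n, θ + t a, by linarith [ht0 a], hcase, by push_cast; linarith, ?_⟩
        have := pairA θ (t a) hθ0 (ht0 a) hcase
        linarith
      · refine ⟨n + 1, θ + t a - 1, by linarith, by linarith [ht1 a],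
          by push_cast; linarith, ?_⟩
        have := pairB θ (t a) hθ1 (ht1 a) (by linarith)
        push_cast
        linarith
  obtain ⟨n, θ, hθ0, hθ1, hnθ, hSphi⟩ := key Finset.univ
  rw [show ∑ j ∈ Finset.univ, t j = T from rfl] at hnθ
  -- ensure n + 1 ≤ k
  obtain ⟨n, θ, hθ0, hθ1, hnθ, hSphi, hnk⟩ :
      ∃ n : ℕ, ∃ θ : ℝ, 0 ≤ θ ∧ θ ≤ 1 ∧ (n : ℝ) + θ = T ∧
        (∑ j ∈ Finset.univ, φ (t j) ≤ (n : ℝ) * φ 1 + φ θ) ∧ n + 1 ≤ k := by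
    by_cases h : n + 1 ≤ k
    · exact ⟨n, θ, hθ0, hθ1, hnθ, hSphi, h⟩
    · have h1 : (n : ℝ) ≤ T := by linarith
      have h2 : (n : ℝ) ≤ k := le_trans h1 hTk
      have h3 : n ≤ k := by exact_mod_cast h2
      have hn_eq : n = k := by omega
      have hθeq : θ = 0 := by
        have : (k : ℝ) + θ = T := by rw [← hnθ, hn_eq]
        linarith
      refine ⟨k - 1, 1, zero_le_one, le_refl _, ?_, ?_, by omega⟩
      · rw [Nat.cast_sub (by omega : 1 ≤ k)]
        rw [hn_eq, hθeq] at hnθ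
        push_cast
        linarith
      · rw [hn_eq, hθeq] at hSphi
        rw [Nat.cast_sub (by omega : 1 ≤ k)]
        rw [hφ0] at hSphi
        push_cast
        linarith

  -- setup for the extreme point
  have hnk1 : n + 1 ≤ k := hnk
  have hnk' : n ≤ k := by omega
  set K : ℕ := k - (n + 1) with hKdef
  have hKk : K < k := by omega
  have hKc : (K : ℝ) = (k : ℝ) - n - 1 := by
    rw [hKdef, Nat.cast_sub hnk1]; push_cast; ring
  have hEc : E = c + 1 := by rw [hcdef]; ring
  obtain ⟨r, hrdef⟩ : ∃ r : ℝ → Fin k → ℝ, r = fun (a : ℝ) (j : Fin k) =>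
      if (j : ℕ) < K then a else if (j : ℕ) = K then 1 - ((k:ℝ) + c * n - 1) * a
      else E * a := ⟨_, rfl⟩
  have hD0 : (0:ℝ) < (k:ℝ) + c * n := by positivity
  have hD1 : (0:ℝ) < (k:ℝ) + c * ((n:ℝ)+1) := by positivity
  obtain ⟨a0, ha0def⟩ : ∃ a0 : ℝ, a0 = 1 / ((k:ℝ) + c * n) := ⟨_, rfl⟩
  obtain ⟨a1, ha1def⟩ : ∃ a1 : ℝ, a1 = 1 / ((k:ℝ) + c * ((n:ℝ)+1)) := ⟨_, rfl⟩
  have ha0pos : 0 < a0 := by rw [ha0def]; positivity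
  have ha1pos : 0 < a1 := by rw [ha1def]; positivity
  have hknc : ((k - n : ℕ) : ℝ) = (k:ℝ) - n := by rw [Nat.cast_sub hnk']
  have hkn1c : ((k - (n+1) : ℕ) : ℝ) = (k:ℝ) - n - 1 := by
    rw [Nat.cast_sub hnk1]; push_cast; ring
  have hDen0 : (n:ℝ) * Real.exp ε + ((k - n : ℕ) : ℝ) = (k:ℝ) + c * n := by
    rw [hknc, ← hE, hcdef]; ring
  have hDen1 : ((n+1:ℕ)) * Real.exp ε + ((k - (n+1) : ℕ) : ℝ) = (k:ℝ) + c * ((n:ℝ)+1) := by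
    rw [hkn1c, ← hE, hcdef]; push_cast; ring
  have hr0 : r a0 = keyDist k n ε := by
    funext j
    simp only [hrdef, keyDist, hDen0]
    by_cases h1 : (j:ℕ) < K
    · rw [if_pos h1, if_pos (by omega : (j:ℕ) < k - n), ha0def]
    · by_cases h2 : (j:ℕ) = K
      · rw [if_neg h1, if_pos h2, if_pos (by omega : (j:ℕ) < k - n), ha0def]
        field_simp
        ring
      · rw [if_neg h1, if_neg h2, if_neg (by omega : ¬ (j:ℕ) < k - n), ha0def, ← hE]
        field_simp
  have hr1 : r a1 = keyDist k (n+1) ε := by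
    funext j
    simp only [hrdef, keyDist, hDen1]
    by_cases h1 : (j:ℕ) < K
    · rw [if_pos h1, if_pos (by omega : (j:ℕ) < k - (n+1)), ha1def]
    · by_cases h2 : (j:ℕ) = K
      · rw [if_neg h1, if_pos h2, if_neg (by omega : ¬ (j:ℕ) < k - (n+1)), ha1def, ← hE]
        rw [eq_div_iff hD1.ne', hcdef]
        have hD1' : (k:ℝ) + (E-1)*((n:ℝ)+1) ≠ 0 := by rw [← hcdef]; exact hD1.ne'
        field_simp [hD1']
        ring
      · rw [if_neg h1, if_neg h2, if_neg (by omega : ¬ (j:ℕ) < k - (n+1)), ha1def, ← hE]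
        field_simp
  obtain ⟨τ, hτdef⟩ : ∃ τ : Fin k → ℝ, τ = fun (j : Fin k) =>
      if (j:ℕ) < K then (0:ℝ) else if (j:ℕ) = K then θ else 1 := ⟨_, rfl⟩
  have hτ01 : ∀ j, 0 ≤ τ j := by
    intro j; simp only [hτdef]; split_ifs <;> [exact le_refl 0; exact hθ0; exact zero_le_one]
  have hrm : r m = fun j => m * (1 + c * τ j) := by
    funext j
    simp only [hrdef, hτdef]
    by_cases h1 : (j:ℕ) < K
    · rw [if_pos h1, if_pos h1]; ring
    · by_cases h2 : (j:ℕ) = K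
      · rw [if_neg h1, if_pos h2, if_neg h1, if_pos h2]
        linear_combination -hTsum - m*c*hnθ
      · rw [if_neg h1, if_neg h2, if_neg h1, if_neg h2, hcdef]; ring
  have hn' : k - K - 1 = n := by omega
  have hsum_rm : ∑ j, m * (1 + c * τ j) = 1 := by
    have hcongr : ∀ j : Fin k, m * (1 + c * τ j) =
        (if (j:ℕ) < K then m else if (j:ℕ) = K then m * (1 + c*θ) else m * E) := by
      intro j; simp only [hτdef]
      split_ifs
      · ring
      · ring
      · rw [hcdef]; ring
    rw [Finset.sum_congr rfl fun j _ => hcongr j, aux_sum_pattern3 k K hKk, hn', hKc]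
    linear_combination hTsum + m*c*hnθ + (n:ℝ)*m*hEc
  have hHrm : Hent (r m) = -Real.log m - m * ((n:ℝ) * φ 1 + φ θ) := by
    rw [hrm, aux_Hent_eq c m hm0 τ (fun j => hφpos _ (hτ01 j)) hsum_rm]
    have hcongr : ∀ j : Fin k, (1 + c * τ j) * Real.log (1 + c * τ j) =
        (if (j:ℕ) < K then φ 0 else if (j:ℕ) = K then φ θ else φ 1) := by
      intro j; simp only [hτdef, hφdef]
      split_ifs <;> norm_num
    rw [Finset.sum_congr rfl fun j _ => hcongr j, aux_sum_pattern3 k K hKk, hn', hφ0]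
    ring
  have hHq : Hent q = -Real.log m - m * ∑ j, φ (t j) := by
    have hfe : q = fun j => m * (1 + c * t j) := funext hqt
    have hs1 : ∑ j, m * (1 + c * t j) = 1 := by rw [← hfe]; exact hq.2
    rw [hfe, aux_Hent_eq c m hm0 t (fun j => hφpos _ (ht0 j)) hs1]
    try simp only [hφdef]
  have hq_ge_rm : Hent (r m) ≤ Hent q := by
    rw [hHq, hHrm]
    have hmul := mul_le_mul_of_nonneg_left hSphi hm0.le
    linarith
  -- m is a convex combination of a0 and a1
  have hDT : (0:ℝ) < (k:ℝ) + c * T := by positivity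
  have hmeq : m = 1 / ((k:ℝ) + c * T) := by
    rw [eq_div_iff hDT.ne']; exact hTsum
  have ha1m : a1 ≤ m := by
    rw [hmeq, ha1def]
    apply one_div_le_one_div_of_le hDT
    have h1 : T ≤ (n:ℝ) + 1 := by linarith
    have h2 := mul_le_mul_of_nonneg_left h1 hc.le
    linarith
  have hma0 : m ≤ a0 := by
    rw [hmeq, ha0def]
    apply one_div_le_one_div_of_le hD0
    have h1 : (n:ℝ) ≤ T := by linarith
    have h2 := mul_le_mul_of_nonneg_left h1 hc.le
    linarith
  have ha01 : a1 < a0 := by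
    rw [ha0def, ha1def]
    apply one_div_lt_one_div_of_lt hD0
    have : c * ((n:ℝ) + 1) = c * (n:ℝ) + c := by ring
    linarith
  obtain ⟨lam, hlamdef⟩ : ∃ lam : ℝ, lam = (m - a1) / (a0 - a1) := ⟨_, rfl⟩
  have hlam0 : 0 ≤ lam := by
    rw [hlamdef]; exact div_nonneg (by linarith) (by linarith)
  have hlam1 : lam ≤ 1 := by
    rw [hlamdef, div_le_one (by linarith)]; linarith
  have hmcomb : m = lam * a0 + (1 - lam) * a1 := by
    have h : lam * (a0 - a1) = m - a1 := by
      rw [hlamdef]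
      exact div_mul_cancel₀ _ (sub_ne_zero.2 ha01.ne')
    linear_combination -h
  have hcomb : r m = fun j => lam * r a0 j + (1-lam) * r a1 j := by
    funext j
    simp only [hrdef]
    split_ifs
    · exact hmcomb
    · linear_combination (1 - ((k:ℝ)+c*n)) * hmcomb
    · linear_combination E * hmcomb
  have hkdpos : ∀ (s : ℕ), ∀ j, 0 ≤ keyDist k s ε j := by
    intro s j
    have hdpos : (0:ℝ) < (s:ℝ) * Real.exp ε + ((k - s:ℕ):ℝ) := by
      rcases Nat.eq_zero_or_pos s with hs | hs
      · subst hs; simp only [Nat.cast_zero, zero_mul, Nat.sub_zero, zero_add]; exact hk0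
      · have h1 : (0:ℝ) < (s:ℝ) * Real.exp ε := by
          have : (0:ℝ) < (s:ℝ) := by exact_mod_cast hs
          positivity
        have h2 : (0:ℝ) ≤ ((k - s:ℕ):ℝ) := Nat.cast_nonneg _
        linarith
    unfold keyDist
    split_ifs <;> positivity
  have hconc : min (Hent (r a0)) (Hent (r a1)) ≤ Hent (r m) := by
    have hr0n : ∀ j, 0 ≤ r a0 j := by rw [hr0]; exact hkdpos n
    have hr1n : ∀ j, 0 ≤ r a1 j := by rw [hr1]; exact hkdpos (n+1)
    have hpt : ∀ j : Fin k,
        (lam * r a0 j + (1-lam) * r a1 j) * Real.log (lam * r a0 j + (1-lam) * r a1 j)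
        ≤ lam * (r a0 j * Real.log (r a0 j)) + (1-lam) * (r a1 j * Real.log (r a1 j)) := by
      intro j
      have h := Real.convexOn_mul_log.2 (Set.mem_Ici.2 (hr0n j)) (Set.mem_Ici.2 (hr1n j))
        hlam0 (by linarith : (0:ℝ) ≤ 1 - lam) (by ring)
      simpa using h
    have hsum := Finset.sum_le_sum (fun j (_ : j ∈ Finset.univ) => hpt j)
    have hmix : lam * Hent (r a0) + (1-lam) * Hent (r a1) ≤ Hent (r m) := by
      rw [hcomb]
      unfold Hent
      have e : lam * -(∑ j, r a0 j * Real.log (r a0 j))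
          + (1-lam) * -(∑ j, r a1 j * Real.log (r a1 j))
          = -∑ j : Fin k, (lam * (r a0 j * Real.log (r a0 j))
              + (1-lam) * (r a1 j * Real.log (r a1 j))) := by
        rw [Finset.sum_add_distrib, ← Finset.mul_sum, ← Finset.mul_sum]
        ring
      rw [e]
      exact neg_le_neg hsum
    rcases le_total (Hent (r a0)) (Hent (r a1)) with hcase | hcase
    · rw [min_eq_left hcase]
      have h2 := mul_le_mul_of_nonneg_left hcase (by linarith : (0:ℝ) ≤ 1 - lam)
      have h3 : Hent (r a0) = lam * Hent (r a0) + (1-lam) * Hent (r a0) := by ring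
      linarith
    · rw [min_eq_right hcase]
      have h2 := mul_le_mul_of_nonneg_left hcase hlam0
      have h3 : Hent (r a1) = lam * Hent (r a1) + (1-lam) * Hent (r a1) := by ring
      linarith
  -- entropy formula for keyDist
  obtain ⟨F, hFdef⟩ : ∃ F : ℝ → ℝ, F = fun x : ℝ =>
      Real.log ((k:ℝ) + c * x) - x * ε * E / ((k:ℝ) + c * x) := ⟨_, rfl⟩
  have hDposx : ∀ x : ℝ, 0 ≤ x → (0:ℝ) < (k:ℝ) + c * x := by
    intro x hx; positivity
  have hKD : ∀ s : ℕ, s ≤ k → Hent (keyDist k s ε) = F (s:ℝ) := by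
    intro s hs
    have hsc : ((k - s:ℕ):ℝ) = (k:ℝ) - s := by rw [Nat.cast_sub hs]
    have hDs : (s:ℝ) * Real.exp ε + ((k - s : ℕ) : ℝ) = (k:ℝ) + c * s := by
      rw [hsc, ← hE, hcdef]; ring
    have hdp : (0:ℝ) < (k:ℝ) + c * (s:ℝ) := hDposx s (Nat.cast_nonneg s)
    obtain ⟨σ, hσdef⟩ : ∃ σ : Fin k → ℝ, σ = fun (j : Fin k) =>
        if (j:ℕ) < k - s then (0:ℝ) else 1 := ⟨_, rfl⟩
    have hkd_eq : keyDist k s ε = fun j => (1/((k:ℝ)+c*s)) * (1 + c * σ j) := by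
      funext j
      simp only [keyDist, hDs, hσdef]
      split_ifs
      · ring
      · rw [← hE]; field_simp; rw [hcdef]; ring
    have hσ0 : ∀ j, 0 ≤ σ j := by
      intro j; rw [hσdef]; dsimp only; split_ifs
      · exact le_refl 0
      · exact zero_le_one
    have hsum : ∑ j, (1/((k:ℝ)+c*s)) * (1 + c * σ j) = 1 := by
      have hcongr : ∀ j : Fin k, (1/((k:ℝ)+c*s)) * (1 + c * σ j)
          = (if (j:ℕ) < k - s then (1/((k:ℝ)+c*s)) * 1 else (1/((k:ℝ)+c*s)) * E) := by
        intro j; rw [hσdef]; dsimp only; split_ifs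
        · ring
        · rw [hcdef]; ring
      rw [Finset.sum_congr rfl fun j _ => hcongr j,
        aux_sum_pattern2 k (k - s) (by omega) _ _, hsc]
      have hss : ((k - (k - s):ℕ):ℝ) = (s:ℝ) := by
        have : k - (k - s) = s := by omega
        rw [this]
      rw [hss]
      field_simp
      rw [hcdef]; ring
    rw [hkd_eq, aux_Hent_eq c _ (by positivity) σ (fun j => hφpos _ (hσ0 j)) hsum]
    have hcongr2 : ∀ j : Fin k, (1 + c * σ j) * Real.log (1 + c * σ j)
        = (if (j:ℕ) < k - s then (0:ℝ) else ε * E) := by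
      intro j; rw [hσdef]; dsimp only; split_ifs
      · norm_num
      · have h1 : 1 + c * 1 = E := by rw [hcdef]; ring
        rw [h1, hlε]; ring
    rw [Finset.sum_congr rfl fun j _ => hcongr2 j,
      aux_sum_pattern2 k (k - s) (by omega) _ _]
    have hss : ((k - (k - s):ℕ):ℝ) = (s:ℝ) := by
      have : k - (k - s) = s := by omega
      rw [this]
    rw [hss, hFdef]
    dsimp only
    rw [one_div, Real.log_inv]
    field_simp
    ring
  -- the location of the minimum
  have hE1' : E - 1 ≠ 0 := by linarith
  have hc2 : (c:ℝ)^2 ≠ 0 := pow_ne_zero 2 hc.ne'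
  have hl2 : c^2 * l = (k:ℝ) * (ε * E - c) := by
    rw [hl, mul_comm, div_mul_cancel₀ _ hc2, hcdef]
    ring
  have hεEc : c < ε * E := by
    have h1 : (1:ℝ) - ε < Real.exp (-ε) := by
      have := Real.add_one_lt_exp (by linarith : -ε ≠ 0)
      linarith
    have h3 : Real.exp (-ε) * E = 1 := by
      rw [hE, ← Real.exp_add]; simp
    have h4 := mul_lt_mul_of_pos_right h1 hE0
    rw [h3] at h4
    have h5 : (1 - ε) * E = E - ε * E := by ring
    rw [hcdef]
    linarith
  have hl0 : 0 < l := by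
    have hleq : l = (k:ℝ) * (ε*E - c) / c^2 := by
      rw [← hl2]
      field_simp
    rw [hleq]
    apply div_pos (mul_pos hk0 (by linarith)) (by positivity)
  have hεc : ε ≤ c := by
    rw [hcdef, hE]
    linarith [Real.add_one_le_exp ε]
  have hlk : l ≤ (k:ℝ) := by
    have h1 : ε * E - c ≤ c^2 := by
      have h2 := mul_le_mul_of_nonneg_right hεc hE0.le
      have h3 : c * E = c^2 + c := by rw [hcdef]; ring
      linarith
    have h2 : c^2 * l ≤ c^2 * (k:ℝ) := by
      rw [hl2]
      calc (k:ℝ) * (ε * E - c) ≤ (k:ℝ) * c^2 :=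
            mul_le_mul_of_nonneg_left h1 hk0.le
        _ = c^2 * (k:ℝ) := by ring
    exact le_of_mul_le_mul_left h2 (by positivity)
  -- monotonicity of F
  have hFmono : ∀ x y : ℝ, l ≤ x → x ≤ y → F x ≤ F y := by
    intro x y hx hxy
    have hx0 : 0 ≤ x := le_trans hl0.le hx
    have hy0 : 0 ≤ y := le_trans hx0 hxy
    have hDx := hDposx x hx0
    have hDy := hDposx y hy0
    have hlog : ((k:ℝ) + c*y - ((k:ℝ) + c*x)) / ((k:ℝ)+c*y)
        ≤ Real.log ((k:ℝ)+c*y) - Real.log ((k:ℝ)+c*x) := by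
      have h1 := Real.log_le_sub_one_of_pos (div_pos hDx hDy)
      rw [Real.log_div hDx.ne' hDy.ne'] at h1
      have h2 : ((k:ℝ)+c*x)/((k:ℝ)+c*y) - 1
          = -((((k:ℝ)+c*y) - ((k:ℝ)+c*x))/((k:ℝ)+c*y)) := by
        field_simp
        ring
      linarith
    have e1 : y*ε*E/((k:ℝ)+c*y) - x*ε*E/((k:ℝ)+c*x)
        = (ε*E*(k:ℝ)*(y-x)) / (((k:ℝ)+c*x)*((k:ℝ)+c*y)) := by
      field_simp
      ring
    have e2 : (((k:ℝ)+c*y) - ((k:ℝ)+c*x)) / ((k:ℝ)+c*y)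
        = (c*(y-x)*((k:ℝ)+c*x)) / (((k:ℝ)+c*x)*((k:ℝ)+c*y)) := by
      rw [div_eq_div_iff hDy.ne' (by positivity)]
      ring
    have h3 : c*((k:ℝ)+c*x) - ε*E*(k:ℝ) = c^2 * (x - l) := by
      linear_combination hl2
    have h4 : 0 ≤ (y - x) * (c^2 * (x - l)) :=
      mul_nonneg (by linarith) (mul_nonneg (by positivity) (by linarith))
    have h6 : 0 ≤ (y - x) * (c*((k:ℝ)+c*x) - ε*E*(k:ℝ)) := by
      rw [h3]; exact h4
    have hnum : ε*E*(k:ℝ)*(y-x) ≤ c*(y-x)*((k:ℝ)+c*x) := by linarith only [h6]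
    have hdiv : (ε*E*(k:ℝ)*(y-x)) / (((k:ℝ)+c*x)*((k:ℝ)+c*y))
        ≤ (c*(y-x)*((k:ℝ)+c*x)) / (((k:ℝ)+c*x)*((k:ℝ)+c*y)) := by
      have hDD : (0:ℝ) < ((k:ℝ)+c*x)*((k:ℝ)+c*y) := by positivity
      have hq2 := div_nonneg (sub_nonneg.2 hnum) hDD.le
      rw [sub_div] at hq2
      linarith
    rw [hFdef]
    dsimp only
    linarith [hlog, e1, e2, hdiv]
  have hFanti : ∀ x y : ℝ, 0 ≤ x → x ≤ y → y ≤ l → F y ≤ F x := by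
    intro x y hx0 hxy hyl
    have hy0 : 0 ≤ y := le_trans hx0 hxy
    have hDx := hDposx x hx0
    have hDy := hDposx y hy0
    have hlog : Real.log ((k:ℝ)+c*y) - Real.log ((k:ℝ)+c*x)
        ≤ (((k:ℝ)+c*y) - ((k:ℝ)+c*x)) / ((k:ℝ)+c*x) := by
      have h1 := Real.log_le_sub_one_of_pos (div_pos hDy hDx)
      rw [Real.log_div hDy.ne' hDx.ne'] at h1
      have h2 : ((k:ℝ)+c*y)/((k:ℝ)+c*x) - 1
          = (((k:ℝ)+c*y) - ((k:ℝ)+c*x))/((k:ℝ)+c*x) := by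
        field_simp
      linarith
    have e1 : y*ε*E/((k:ℝ)+c*y) - x*ε*E/((k:ℝ)+c*x)
        = (ε*E*(k:ℝ)*(y-x)) / (((k:ℝ)+c*x)*((k:ℝ)+c*y)) := by
      field_simp
      ring
    have e2 : (((k:ℝ)+c*y) - ((k:ℝ)+c*x)) / ((k:ℝ)+c*x)
        = (c*(y-x)*((k:ℝ)+c*y)) / (((k:ℝ)+c*x)*((k:ℝ)+c*y)) := by
      rw [div_eq_div_iff hDx.ne' (by positivity)]
      ring
    have h3 : c*((k:ℝ)+c*y) - ε*E*(k:ℝ) = c^2 * (y - l) := by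
      linear_combination hl2
    have h4 : 0 ≤ (y - x) * (c^2 * (l - y)) :=
      mul_nonneg (by linarith) (mul_nonneg (by positivity) (by linarith))
    have h6 : 0 ≤ (y - x) * (ε*E*(k:ℝ) - c*((k:ℝ)+c*y)) := by
      have h5 : ε*E*(k:ℝ) - c*((k:ℝ)+c*y) = c^2 * (l - y) := by
        linear_combination -h3
      rw [h5]; exact h4
    have hnum : c*(y-x)*((k:ℝ)+c*y) ≤ ε*E*(k:ℝ)*(y-x) := by linarith only [h6]
    have hdiv : (c*(y-x)*((k:ℝ)+c*y)) / (((k:ℝ)+c*x)*((k:ℝ)+c*y))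
        ≤ (ε*E*(k:ℝ)*(y-x)) / (((k:ℝ)+c*x)*((k:ℝ)+c*y)) := by
      have hDD : (0:ℝ) < ((k:ℝ)+c*x)*((k:ℝ)+c*y) := by positivity
      have hq2 := div_nonneg (sub_nonneg.2 hnum) hDD.le
      rw [sub_div] at hq2
      linarith
    rw [hFdef]
    dsimp only
    linarith [hlog, e1, e2, hdiv]
  -- final assembly
  have hceilk : ⌈l⌉₊ ≤ k := Nat.ceil_le.mpr (by exact_mod_cast hlk)
  have hfloork : ⌊l⌋₊ ≤ k := le_trans (Nat.floor_le_ceil l) hceilk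
  have hstep : min (F (n:ℝ)) (F ((n:ℝ)+1)) ≤ Hent q := by
    have h0 : Hent (keyDist k n ε) = F (n:ℝ) := hKD n (by omega)
    have h1 : Hent (keyDist k (n+1) ε) = F ((n:ℝ)+1) := by
      rw [hKD (n+1) hnk1]
      exact congrArg F (by push_cast; ring)
    calc min (F (n:ℝ)) (F ((n:ℝ)+1)) = min (Hent (r a0)) (Hent (r a1)) := by
          rw [hr0, hr1, h0, h1]
      _ ≤ Hent (r m) := hconc
      _ ≤ Hent q := hq_ge_rm
  have goalF : min (F ((⌈l⌉₊:ℕ):ℝ)) (F ((⌊l⌋₊:ℕ):ℝ)) ≤ Hent q := by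
    rcases le_or_gt l (n:ℝ) with hcase | hcase
    · have hcn : ((⌈l⌉₊:ℕ):ℝ) ≤ (n:ℝ) := by
        exact_mod_cast Nat.ceil_le.mpr hcase
      have hf1 : F ((⌈l⌉₊:ℕ):ℝ) ≤ F (n:ℝ) := hFmono _ _ (Nat.le_ceil l) hcn
      have hf2 : F ((⌈l⌉₊:ℕ):ℝ) ≤ F ((n:ℝ)+1) := hFmono _ _ (Nat.le_ceil l) (by linarith)
      exact le_trans (min_le_left _ _) (le_trans (le_min hf1 hf2) hstep)
    · rcases le_or_gt ((n:ℝ)+1) l with hcase2 | hcase2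
      · have hfl' : n + 1 ≤ ⌊l⌋₊ := Nat.le_floor (by push_cast; exact hcase2)
        have hfl : (n:ℝ)+1 ≤ ((⌊l⌋₊:ℕ):ℝ) := by exact_mod_cast hfl'
        have hfloor_le_l : ((⌊l⌋₊:ℕ):ℝ) ≤ l := Nat.floor_le hl0.le
        have hf1 : F ((⌊l⌋₊:ℕ):ℝ) ≤ F ((n:ℝ)+1) :=
          hFanti _ _ (by positivity) hfl hfloor_le_l
        have hf2 : F ((⌊l⌋₊:ℕ):ℝ) ≤ F (n:ℝ) :=
          hFanti _ _ (Nat.cast_nonneg n) (by linarith) hfloor_le_l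
        exact le_trans (min_le_right _ _) (le_trans (le_min hf2 hf1) hstep)
      · have hfn : ⌊l⌋₊ = n := by
          rw [Nat.floor_eq_iff hl0.le]
          exact ⟨le_of_lt hcase, by push_cast; linarith⟩
        have hcn : ⌈l⌉₊ = n + 1 := by
          rw [Nat.ceil_eq_iff (Nat.succ_ne_zero n)]
          constructor
          · simpa using hcase
          · push_cast; linarith
        rw [hfn, hcn]
        rw [show ((n+1:ℕ):ℝ) = (n:ℝ)+1 by push_cast; ring]
        rw [min_comm]
        exact hstep
  rw [hKD _ hceilk, hKD _ hfloork]
  exact goalF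
end

section
/- Let k ≥ 1, ε ≥ 0, and let q be a probability distribution on ℤ/kℤ with q(u) > 0 for all u and max_u q(u) ≤ e^ε · min_u q(u). Define f : ℤ/kℤ × ℤ/kℤ → ℤ/kℤ by f(x,u) = x + u (addition in ℤ/kℤ). Then: (i) for every u, the map x ↦ f(x,u) is injective, so the input is recoverable from the output and the key; (ii) the induced kernel Q(y|x) = q(y − x) is a stochastic matrix satisfying Q(y|x) ≤ e^ε Q(y|x′) for all x, x′, y. Hence there exists an ε-LDP-Rec mechanism with input, key, and output alphabets all of size k, designed using the key distribution q. -/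
open Finset

/-- **Lemma 5.1 of the paper (sufficiency direction of Theorem 4):** given a full-support
key distribution `q` on `ℤ/kℤ` with `max q ≤ e^ε min q`, the map `f(x,u) = x + u` yields an
`ε`-LDP-Rec mechanism with input, key and output alphabets of size `k`: (i) `f(·,u)` is
injective for each `u` (recoverability), and (ii) the induced kernel `Q(y|x) = q(y − x)`
is a stochastic matrix satisfying the `ε`-LDP ratio bound. -/
theorem stmt11 (k : ℕ) [NeZero k] (hk : 1 ≤ k) (ε : ℝ) (hε : 0 ≤ ε)
    (q : ZMod k → ℝ) (hq : IsDist q) (hqpos : ∀ u, 0 < q u)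
    (hratio : ∀ u u' : ZMod k, q u ≤ Real.exp ε * q u') :
    (∀ u : ZMod k, Function.Injective (fun x : ZMod k => x + u)) ∧
    (∀ x : ZMod k, (∀ y : ZMod k, 0 ≤ q (y - x)) ∧ ∑ y : ZMod k, q (y - x) = 1) ∧
    (∀ x : ZMod k, ∀ u y : ZMod k, x + u = y ↔ u = y - x) ∧
    (∀ x x' y : ZMod k, q (y - x) ≤ Real.exp ε * q (y - x')) := by
  refine ⟨fun u x y h => by simpa using h, fun x => ⟨fun y => hq.1 _, ?_⟩,
    fun x u y => ⟨fun h => by rw [← h]; ring, fun h => by rw [h]; ring⟩, fun x x' y => hratio _ _⟩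
  · rw [← hq.2]
    exact Fintype.sum_equiv (Equiv.subRight x) _ _ (fun y => rfl)
end

section
/- Let k ≥ 1, ε ≥ 0, and m > k. Suppose there exists an ε-LDP-Rec mechanism with input alphabet [k], output alphabet a finite set Y, and key alphabet U of size m with key distribution q (full support). Then there exists an ε-LDP-Rec mechanism with input alphabet [k], output alphabet of size k, and key alphabet of size k with key distribution q′ such that H(q′) ≤ H(q). -/
open Finset

/-- Superadditivity of `t ↦ -(t log t)` over a finite sum of nonnegative reals. -/
lemma eta_sum_le {U : Type*} (t : Finset U) (g : U → ℝ) (hg : ∀ u, 0 ≤ g u) :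
    -((∑ u ∈ t, g u) * Real.log (∑ u ∈ t, g u)) ≤ ∑ u ∈ t, -(g u * Real.log (g u)) := by
  have key : ∀ u ∈ t, g u * Real.log (g u) ≤ g u * Real.log (∑ v ∈ t, g v) := by
    intro u hu
    rcases (hg u).lt_or_eq with h | h
    · exact mul_le_mul_of_nonneg_left
        (Real.log_le_log h (Finset.single_le_sum (fun v _ => hg v) hu)) (hg u)
    · simp [← h]
  rw [Finset.sum_mul, Finset.sum_neg_distrib]
  exact neg_le_neg (Finset.sum_le_sum key)

/-- Existence of an entropy minimizer on the ratio-bounded polytope. -/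
lemma exists_min_polytope (k : ℕ) (hk : 0 < k) (E : ℝ) (hE : 1 ≤ E) :
    ∃ ρ0 : Fin k → ℝ, (∀ i, 0 ≤ ρ0 i) ∧ (∑ i, ρ0 i) = 1 ∧ (∀ i j, ρ0 i ≤ E * ρ0 j) ∧
      ∀ ρ : Fin k → ℝ, (∀ i, 0 ≤ ρ i) → (∑ i, ρ i) = 1 → (∀ i j, ρ i ≤ E * ρ j) →
        Hent ρ0 ≤ Hent ρ := by
  classical
  set P : Set (Fin k → ℝ) :=
    {ρ | (∀ i, 0 ≤ ρ i) ∧ (∑ i, ρ i) = 1 ∧ ∀ i j, ρ i ≤ E * ρ j} with hP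
  have hkR : ((k : ℝ)) ≠ 0 := by positivity
  have hne : P.Nonempty := by
    refine ⟨fun _ => (k : ℝ)⁻¹, fun i => by positivity, ?_, fun i j => ?_⟩
    · simp only [Finset.sum_const, Finset.card_univ, Fintype.card_fin, nsmul_eq_mul]
      exact mul_inv_cancel₀ hkR
    · nlinarith [inv_nonneg.mpr (le_of_lt (show (0:ℝ) < k by positivity))]
  have hclosed : IsClosed P := by
    have e1 : P = (⋂ i, {ρ : Fin k → ℝ | 0 ≤ ρ i}) ∩
        ({ρ : Fin k → ℝ | (∑ i, ρ i) = 1} ∩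
          ⋂ i, ⋂ j, {ρ : Fin k → ℝ | ρ i ≤ E * ρ j}) := by
      ext ρ
      simp only [hP, Set.mem_setOf_eq, Set.mem_inter_iff, Set.mem_iInter]
    rw [e1]
    refine ((isClosed_iInter fun i =>
        isClosed_le continuous_const (continuous_apply i))).inter
      (((isClosed_eq (continuous_finset_sum _ fun i _ => continuous_apply i)
        continuous_const)).inter
        (isClosed_iInter fun i => isClosed_iInter fun j =>
          isClosed_le (continuous_apply i) (continuous_const.mul (continuous_apply j))))
  have hsub : P ⊆ Set.pi Set.univ (fun _ : Fin k => Set.Icc (0:ℝ) 1) := by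
    rintro ρ ⟨hnn, hsum, -⟩ i -
    refine ⟨hnn i, ?_⟩
    calc ρ i ≤ ∑ j, ρ j := Finset.single_le_sum (fun j _ => hnn j) (Finset.mem_univ i)
    _ = 1 := hsum
  have hcomp : IsCompact P :=
    (isCompact_univ_pi (fun _ => isCompact_Icc)).of_isClosed_subset hclosed hsub
  have hcont : ContinuousOn Hent P := by
    have : Continuous (fun ρ : Fin k → ℝ => Hent ρ) := by
      unfold Hent
      exact (continuous_finset_sum _ fun i _ =>
        Real.continuous_mul_log.comp (continuous_apply i)).neg
    exact this.continuousOn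
  obtain ⟨ρ0, hρ0P, hmin⟩ := hcomp.exists_isMinOn hne hcont
  exact ⟨ρ0, hρ0P.1, hρ0P.2.1, hρ0P.2.2,
    fun ρ h1 h2 h3 => isMinOn_iff.mp hmin ρ ⟨h1, h2, h3⟩⟩

/-- **Lemma 5.2 of the paper:** if an `ε`-LDP-Rec mechanism on input alphabet `[k]` uses a
key of size `m > k`, then there is an `ε`-LDP-Rec mechanism on `[k]` with key and output
alphabets of size `k` whose key entropy is no larger. -/
theorem stmt12 (k m : ℕ) (hk : 1 ≤ k) (hm : k < m) (ε : ℝ) (hε : 0 ≤ ε)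
    (U Y : Type*) [Fintype U] [Fintype Y] [DecidableEq Y]
    (hU : Fintype.card U = m)
    (q : U → ℝ) (hq : IsDist q) (hqpos : ∀ u, 0 < q u)
    (f : Fin k → U → Y)
    (hLDP : ∀ x x' y, (∑ u ∈ Finset.univ.filter (fun u => f x u = y), q u) ≤
      Real.exp ε * ∑ u ∈ Finset.univ.filter (fun u => f x' u = y), q u)
    (hrec : ∀ u, Function.Injective (fun x => f x u)) :
    ∃ (q' : Fin k → ℝ) (f' : Fin k → Fin k → Fin k),
      IsDist q' ∧ (∀ u, 0 < q' u) ∧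
      (∀ u, Function.Injective (fun x => f' x u)) ∧
      (∀ x x' y, (∑ u ∈ Finset.univ.filter (fun u => f' x u = y), q' u) ≤
        Real.exp ε * ∑ u ∈ Finset.univ.filter (fun u => f' x' u = y), q' u) ∧
      Hent q' ≤ Hent q := by
  classical
  haveI : NeZero k := ⟨by omega⟩
  obtain ⟨ρ0, h0nn, h0sum, h0ratio, h0min⟩ :=
    exists_min_polytope k (by omega) (Real.exp ε) (Real.one_le_exp hε)
  -- positivity of the minimizer
  have h0pos : ∀ i, 0 < ρ0 i := by
    intro i
    rcases (h0nn i).lt_or_eq with h | h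
    · exact h
    · exfalso
      have hall : ∀ j, ρ0 j ≤ 0 := by
        intro j
        have h2 := h0ratio j i
        rw [← h] at h2
        simpa using h2
      have hle : (∑ j, ρ0 j) ≤ 0 := Finset.sum_nonpos fun j _ => hall j
      rw [h0sum] at hle
      linarith
  -- the cyclic mechanism filter computation
  have hfilt : ∀ x y : Fin k, Finset.univ.filter (fun u : Fin k => x + u = y) = {y - x} := by
    intro x y
    ext u
    simp only [Finset.mem_filter, Finset.mem_univ, true_and, Finset.mem_singleton]
    constructor
    · intro h
      exact eq_sub_of_add_eq (by rwa [add_comm] at h)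
    · rintro rfl
      rw [add_comm]
      exact sub_add_cancel y x
  refine ⟨ρ0, fun x u => x + u, ⟨h0nn, h0sum⟩, h0pos, ?_, ?_, ?_⟩
  · intro u x x' h
    exact add_left_injective u h
  · intro x x' y
    rw [hfilt x y, hfilt x' y, Finset.sum_singleton, Finset.sum_singleton]
    exact h0ratio (y - x) (y - x')
  -- the entropy bound
  set p : Fin k → Y → ℝ := fun x y => ∑ u ∈ Finset.univ.filter (fun u => f x u = y), q u
    with hpdef
  have hpnn : ∀ x y, 0 ≤ p x y := fun x y => Finset.sum_nonneg fun u _ => hq.1 u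
  have hcol : ∀ x, ∑ y, p x y = 1 := by
    intro x
    have h1 : ∑ y, ∑ u ∈ Finset.univ.filter (fun u => f x u = y), q u = ∑ u, q u :=
      Finset.sum_fiberwise Finset.univ (fun u => f x u) q
    rw [hpdef]
    rw [h1, hq.2]
  have hrow : ∀ y, ∑ x, p x y ≤ 1 := by
    intro y
    have hdisj : ((Finset.univ : Finset (Fin k)) : Set (Fin k)).PairwiseDisjoint
        (fun x => Finset.univ.filter (fun u => f x u = y)) := by
      intro x _ x' _ hxx'
      simp only [Function.onFun, Finset.disjoint_left, Finset.mem_filter, Finset.mem_univ,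
        true_and]
      rintro u h1 h2
      exact hxx' (hrec u (h1.trans h2.symm))
    calc ∑ x, p x y
        = ∑ u ∈ Finset.univ.biUnion (fun x => Finset.univ.filter (fun u => f x u = y)), q u :=
          (Finset.sum_biUnion hdisj).symm
      _ ≤ ∑ u, q u := Finset.sum_le_sum_of_subset_of_nonneg (Finset.subset_univ _)
          (fun u _ _ => hq.1 u)
      _ = 1 := hq.2
  have hA : ∀ x, ∑ y, -(p x y * Real.log (p x y)) ≤ Hent q := by
    intro x
    have hfib : ∑ y, ∑ u ∈ Finset.univ.filter (fun u => f x u = y), -(q u * Real.log (q u))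
        = ∑ u, -(q u * Real.log (q u)) :=
      Finset.sum_fiberwise Finset.univ (fun u => f x u) (fun u => -(q u * Real.log (q u)))
    have hle : ∑ y, -(p x y * Real.log (p x y)) ≤
        ∑ y, ∑ u ∈ Finset.univ.filter (fun u => f x u = y), -(q u * Real.log (q u)) :=
      Finset.sum_le_sum fun y _ => eta_sum_le _ _ (fun u => hq.1 u)
    rw [hfib] at hle
    unfold Hent
    rwa [← Finset.sum_neg_distrib]
  -- row inequality
  have hC : ∀ y, Hent ρ0 * (∑ x, p x y) ≤ ∑ x, -(p x y * Real.log (p x y)) := by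
    intro y
    have hs0 : 0 ≤ ∑ x, p x y := Finset.sum_nonneg fun x _ => hpnn x y
    rcases hs0.lt_or_eq with hspos | hszero
    · set s : ℝ := ∑ x, p x y with hsdef
      have hs1 : s ≤ 1 := hrow y
      set ρ : Fin k → ℝ := fun x => p x y / s with hρdef
      have hnn : ∀ i, 0 ≤ ρ i := fun i => div_nonneg (hpnn i y) hs0
      have hsum : ∑ i, ρ i = 1 := by
        rw [hρdef]
        rw [← Finset.sum_div]
        exact div_self hspos.ne'
      have hratio : ∀ i j, ρ i ≤ Real.exp ε * ρ j := by
        intro i j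
        have h := hLDP i j y
        rw [hρdef]
        rw [div_le_iff₀ hspos]
        have : Real.exp ε * (p j y / s) * s = Real.exp ε * p j y := by
          field_simp
        rw [this]
        exact h
      have hmin := h0min ρ hnn hsum hratio
      have hident : Hent ρ = (∑ x, -(p x y * Real.log (p x y))) / s + Real.log s := by
        unfold Hent
        rw [← Finset.sum_neg_distrib]
        have hterm : ∀ x : Fin k, -(ρ x * Real.log (ρ x)) =
            -(p x y * Real.log (p x y)) / s + p x y / s * Real.log s := by
          intro x
          rcases (hpnn x y).lt_or_eq with hp | hp
          · rw [hρdef]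
            rw [Real.log_div hp.ne' hspos.ne']
            field_simp
            ring
          · have hz : p x y = 0 := hp.symm
            rw [hρdef]
            simp [hz]
        rw [Finset.sum_congr rfl (fun x _ => hterm x), Finset.sum_add_distrib,
          ← Finset.sum_div, ← Finset.sum_mul, ← Finset.sum_div, ← hsdef,
          div_self hspos.ne', one_mul]
      have hlog : Real.log s ≤ 0 := Real.log_nonpos hs0 hs1
      have hstep : Hent ρ0 ≤ (∑ x, -(p x y * Real.log (p x y))) / s := by
        rw [hident] at hmin
        linarith
      calc Hent ρ0 * s ≤ ((∑ x, -(p x y * Real.log (p x y))) / s) * s :=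
            mul_le_mul_of_nonneg_right hstep hs0
        _ = ∑ x, -(p x y * Real.log (p x y)) := div_mul_cancel₀ _ hspos.ne'
    · have hz : ∀ x ∈ Finset.univ, p x y = 0 :=
        (Finset.sum_eq_zero_iff_of_nonneg (fun x _ => hpnn x y)).mp hszero.symm
      have hz' : ∀ x : Fin k, p x y = 0 := fun x => hz x (Finset.mem_univ x)
      rw [← hszero]
      simp [hz']
  have hsum1 : ∑ y, ∑ x, p x y = (k : ℝ) := by
    rw [Finset.sum_comm]
    simp [hcol, Finset.card_univ]
  have hineq : Hent ρ0 * (k : ℝ) ≤ Hent q * (k : ℝ) := by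
    calc Hent ρ0 * (k : ℝ) = ∑ y, Hent ρ0 * (∑ x, p x y) := by
          rw [← Finset.mul_sum, hsum1]
      _ ≤ ∑ y, ∑ x, -(p x y * Real.log (p x y)) := Finset.sum_le_sum fun y _ => hC y
      _ = ∑ x, ∑ y, -(p x y * Real.log (p x y)) := Finset.sum_comm
      _ ≤ ∑ _x : Fin k, Hent q := Finset.sum_le_sum fun x _ => hA x
      _ = Hent q * (k : ℝ) := by
          simp [Finset.sum_const, Finset.card_univ, mul_comm]
  have hk0 : (0 : ℝ) < (k : ℝ) := by
    have : 0 < k := by omega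
    exact_mod_cast this
  exact le_of_mul_le_mul_right hineq hk0
end

section
/- Let m ≥ 2 and let q = (q₁,…,q_m) be a probability distribution with q₁ ≥ q₂ ≥ ⋯ ≥ q_m > 0. Define the probability distribution q′ = (q′₁,…,q′_{m−1}) by q′_j = q_j/(1 − q_m) for j ∈ [m−1]. Then H(q) ≥ H(q′), i.e., removing the least likely symbol and renormalizing does not increase the Shannon entropy. -/
open Finset

/-- **Lemma F.1 of the paper:** removing the least likely symbol of a distribution and
renormalizing does not increase the Shannon entropy.  The alphabet size is `m = n + 2 ≥ 2`,
probabilities are nonincreasing (`q (Fin.last _)` is the smallest) and positive, and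
`q' j = q j / (1 − q_m)` on the first `m − 1` symbols. -/
theorem stmt13 (n : ℕ) (q : Fin (n + 2) → ℝ)
    (hsum : ∑ j, q j = 1)
    (hpos : ∀ j, 0 < q j)
    (hmono : ∀ i j : Fin (n + 2), i ≤ j → q j ≤ q i)
    (q' : Fin (n + 1) → ℝ)
    (hq' : ∀ j : Fin (n + 1), q' j = q j.castSucc / (1 - q (Fin.last (n + 1)))) :
    Hent q' ≤ Hent q := by
  set p := q (Fin.last (n + 1)) with hpdef
  have hppos : 0 < p := hpos _
  have hS : ∑ j : Fin (n + 1), q j.castSucc = 1 - p := by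
    rw [Fin.sum_univ_castSucc] at hsum
    linarith
  set S : ℝ := 1 - p with hSdef
  have hSpos : 0 < S := by
    have h0 : 0 < ∑ j : Fin (n + 1), q j.castSucc :=
      Finset.sum_pos (fun j _ => hpos _) Finset.univ_nonempty
    linarith [hS]
  have hSle : S ≤ 1 := by
    simp only [hSdef]; linarith
  set A : ℝ := ∑ j : Fin (n + 1), q j.castSucc * Real.log (q j.castSucc) with hAdef
  have hq'ent : Hent q' = -(A / S) + Real.log S := by
    unfold Hent
    have hterm : ∀ j : Fin (n + 1), q' j * Real.log (q' j)
        = q j.castSucc * Real.log (q j.castSucc) / S - q j.castSucc / S * Real.log S := by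
      intro j
      rw [hq' j, Real.log_div (hpos _).ne' hSpos.ne']
      ring
    rw [Finset.sum_congr rfl (fun j _ => hterm j), Finset.sum_sub_distrib,
        ← Finset.sum_div, ← hAdef, ← Finset.sum_mul, ← Finset.sum_div, hS]
    field_simp
    ring
  have hqent : Hent q = -(A + p * Real.log p) := by
    unfold Hent
    rw [Fin.sum_univ_castSucc, ← hAdef, ← hpdef]
  have hA : S * Real.log p ≤ A := by
    rw [← hS, Finset.sum_mul]
    apply Finset.sum_le_sum
    intro j _
    have : Real.log p ≤ Real.log (q j.castSucc) :=
      Real.log_le_log hppos (hmono _ _ (Fin.le_last _))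
    nlinarith [hpos j.castSucc]
  rw [hq'ent, hqent]
  have hlogS : Real.log S ≤ 0 := Real.log_nonpos hSpos.le hSle
  have hdiv : (-A) / S ≤ -(A + p * Real.log p) - Real.log S := by
    rw [div_le_iff₀ hSpos]
    have h1 : S * Real.log p * p ≤ A * p := mul_le_mul_of_nonneg_right hA hppos.le
    have h2 : S * Real.log S ≤ 0 := mul_nonpos_of_nonneg_of_nonpos hSpos.le hlogS
    have h3 : A * S = A - A * p := by rw [hSdef]; ring
    nlinarith [h1, h2, h3]
  have : -(A / S) = (-A) / S := by ring
  linarith [hdiv]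
end

section
/- Let k ≥ 1, T ≥ 1, and ε ≥ 0. Let P be a probability distribution on (ℤ/kℤ)^T with P(v) > 0 for all v and P(v) ≤ e^ε P(v′) for all neighboring v, v′ (differing in exactly one coordinate). Define f : (ℤ/kℤ)^T × (ℤ/kℤ)^T → (ℤ/kℤ)^T by f(x,u) = x ⊕ u, the componentwise sum in ℤ/kℤ, and let the key be distributed according to P. Then: (i) for each fixed u, the map x ↦ f(x,u) is injective, so the input database is recoverable from the output and the key; (ii) the induced kernel Q(y|x) = P(y ⊖ x) is a stochastic matrix satisfying Q(y|x) ≤ e^ε Q(y|x′) for all neighboring databases x, x′ and every output y. Hence f is an ε-DP-Rec mechanism. -/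
open Finset

/-- Two databases are neighboring if they differ in exactly one coordinate. -/
def Neighbor {T : ℕ} {α : Type*} (x x' : Fin T → α) : Prop :=
  ∃ t, x t ≠ x' t ∧ ∀ s, s ≠ t → x s = x' s

/-- **Lemma 6.1 of the paper:** if `P` is a full-support `ε`-DP distribution on
`(ℤ/kℤ)^T` (ratio bound for neighboring databases), then `f(x,u) = x ⊕ u`
(componentwise sum) with key distributed as `P` is an `ε`-DP-Rec mechanism:
(i) `f(·,u)` is injective for each `u`, and (ii) the induced kernel
`Q(y|x) = P(y ⊖ x)` is a stochastic matrix satisfying the `ε`-DP ratio bound for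
neighboring databases. -/
theorem stmt15 (k T : ℕ) [NeZero k] (hk : 1 ≤ k) (hT : 1 ≤ T) (ε : ℝ) (hε : 0 ≤ ε)
    (P : (Fin T → ZMod k) → ℝ) (hP : IsDist P) (hPpos : ∀ v, 0 < P v)
    (hDP : ∀ v v', Neighbor v v' → P v ≤ Real.exp ε * P v') :
    (∀ u : Fin T → ZMod k, Function.Injective (fun x : Fin T → ZMod k => x + u)) ∧
    (∀ x : Fin T → ZMod k, (∀ y, 0 ≤ P (y - x)) ∧ ∑ y : Fin T → ZMod k, P (y - x) = 1) ∧
    (∀ x u y : Fin T → ZMod k, x + u = y ↔ u = y - x) ∧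
    (∀ x x' : Fin T → ZMod k, Neighbor x x' →
      ∀ y : Fin T → ZMod k, P (y - x) ≤ Real.exp ε * P (y - x')) := by
  refine ⟨fun u x x' h => by simpa using congrArg (fun z => z - u) h,
    fun x => ⟨fun y => (hPpos _).le, ?_⟩, fun x u y => ?_, fun x x' hn y => ?_⟩
  · exact Fintype.sum_equiv (Equiv.subRight x) _ _ (fun y => rfl) |>.trans hP.2
  · constructor
    · intro h; rw [← h]; abel
    · intro h; rw [h]; abel
  · apply hDP
    obtain ⟨t, ht, hs⟩ := hn
    refine ⟨t, ?_, fun s hst => ?_⟩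
    · simp only [Pi.sub_apply]; intro h; exact ht (by linear_combination -h)
    · simp [Pi.sub_apply, hs s hst]
end

section
/- Let k ≥ 2, T ≥ 1, and ε > 0, and set l = k(e^ε(ε−1)+1)/(e^ε−1)². Let q^s denote the distribution on [k] with k−s entries equal to 1/(se^ε+k−s) and s entries equal to e^ε/(se^ε+k−s). Then every probability distribution P on ([k])^T satisfying P(x) ≤ e^ε P(x′) for all neighboring x, x′ ∈ [k]^T has Shannon entropy H(P) ≥ T · min_{s ∈ {⌈l⌉,⌊l⌋}} H(q^s). -/
open Finset

namespace S16

open Real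

noncomputable def hR (k : ℕ) (ε s : ℝ) : ℝ :=
  Real.log (s * (Real.exp ε - 1) + k) - s * ε * Real.exp ε / (s * (Real.exp ε - 1) + k)

lemma Hent_eq {S : Type*} [Fintype S] (q : S → ℝ) : Hent q = ∑ s, Real.negMulLog (q s) := by
  simp [Hent, Real.negMulLog_eq_neg]

lemma twoVal (k s : ℕ) (hk : 1 ≤ k) (hs : s ≤ k) {ε : ℝ} (hε : 0 < ε) (m : ℝ)
    (hm : ((k - s : ℕ) : ℝ) * m + (s : ℝ) * (Real.exp ε * m) = 1) :
    ((k - s : ℕ) : ℝ) * Real.negMulLog m + (s : ℝ) * Real.negMulLog (Real.exp ε * m)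
      = hR k ε s := by
  have hE : (1 : ℝ) < Real.exp ε := by
    rw [← Real.exp_zero]; exact Real.exp_lt_exp.mpr hε
  have hcast : ((k - s : ℕ) : ℝ) = (k : ℝ) - (s : ℝ) := by
    push_cast [hs]; ring
  set E := Real.exp ε with hEdef
  set D : ℝ := (s : ℝ) * (E - 1) + k with hD
  have hDpos : 0 < D := by
    have : (1:ℝ) ≤ (k:ℝ) := by exact_mod_cast hk
    have hs0 : (0:ℝ) ≤ (s:ℝ) := by positivity
    nlinarith
  have hmD : m = 1 / D := by
    rw [hcast] at hm
    field_simp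
    nlinarith [hm]
  have hmpos : 0 < m := by rw [hmD]; positivity
  have hlogm : Real.log m = -Real.log D := by
    rw [hmD, one_div, Real.log_inv]
  have hlogEm : Real.log (E * m) = ε - Real.log D := by
    rw [Real.log_mul (by positivity) (ne_of_gt hmpos), hEdef, Real.log_exp, hlogm]; ring
  rw [Real.negMulLog, Real.negMulLog, hlogm, hlogEm, hR, hcast, ← hD, ← hEdef]
  rw [hcast] at hm
  have h1 : ((k:ℝ) - s) * m + s * (E * m) = 1 := hm
  have hm' : m * D = 1 := by rw [hmD]; field_simp
  field_simp
  linear_combination (D * Real.log D) * h1 - ((s:ℝ)*ε*E) * hm'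

lemma card_filter_lt (k m : ℕ) (hm : m ≤ k) :
    (univ.filter fun j : Fin k => (j : ℕ) < m).card = m := by
  have himg : (univ.filter fun j : Fin k => (j : ℕ) < m).image Fin.val = Finset.range m := by
    ext x
    simp only [Finset.mem_image, Finset.mem_filter, Finset.mem_univ, true_and, Finset.mem_range]
    constructor
    · rintro ⟨j, hj, rfl⟩; exact hj
    · intro hx; exact ⟨⟨x, lt_of_lt_of_le hx hm⟩, hx, rfl⟩
  have := congrArg Finset.card himg
  rwa [Finset.card_image_of_injective _ Fin.val_injective, Finset.card_range] at this

lemma keyEnt (k s : ℕ) (hk : 1 ≤ k) (hs : s ≤ k) {ε : ℝ} (hε : 0 < ε) :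
    Hent (keyDist k s ε) = hR k ε s := by
  have hE : (1 : ℝ) < Real.exp ε := by
    rw [← Real.exp_zero]; exact Real.exp_lt_exp.mpr hε
  set E := Real.exp ε with hEdef
  set D : ℝ := (s : ℝ) * E + ((k - s : ℕ) : ℝ) with hD
  have hDpos : 0 < D := by
    have h1 : (0:ℝ) ≤ (s:ℝ) := by positivity
    have h2 : (0:ℝ) ≤ ((k-s:ℕ):ℝ) := by positivity
    have : (k:ℝ) ≤ D := by
      rw [hD]
      have hcast : ((k - s : ℕ) : ℝ) = (k : ℝ) - (s : ℝ) := by push_cast [hs]; ring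
      nlinarith
    have : (1:ℝ) ≤ (k:ℝ) := by exact_mod_cast hk
    linarith
  have key : Hent (keyDist k s ε) =
      ((k - s : ℕ) : ℝ) * Real.negMulLog (1/D) + (s : ℝ) * Real.negMulLog (E * (1/D)) := by
    rw [Hent_eq]
    have : ∀ j : Fin k, Real.negMulLog (keyDist k s ε j) =
        if (j : ℕ) < k - s then Real.negMulLog (1/D) else Real.negMulLog (E * (1/D)) := by
      intro j
      rw [keyDist]
      split <;> [skip; rw [← hEdef]] <;> rw [hD] <;> ring_nf
    rw [Finset.sum_congr rfl fun j _ => this j, Finset.sum_ite, Finset.sum_const,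
      Finset.sum_const, card_filter_lt k (k-s) (Nat.sub_le k s)]
    have hcard2 : (univ.filter fun j : Fin k => ¬ (j:ℕ) < k - s).card = s := by
      have := Finset.card_filter_add_card_filter_not (s := (univ : Finset (Fin k)))
        (p := fun j : Fin k => (j:ℕ) < k - s)
      rw [card_filter_lt k (k-s) (Nat.sub_le k s), Finset.card_univ, Fintype.card_fin] at this
      omega
    rw [hcard2]
    push_cast
    ring
  rw [key]
  apply twoVal k s hk hs hε
  have hcast : ((k - s : ℕ) : ℝ) = (k : ℝ) - (s : ℝ) := by push_cast [hs]; ring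
  rw [hcast]
  field_simp
  rw [hD, hcast, ← hEdef]
  ring

lemma hasDerivAt_hR (k : ℕ) (hk : 1 ≤ k) {ε : ℝ} (hε : 0 < ε) {x : ℝ} (hx : 0 ≤ x) :
    HasDerivAt (hR k ε)
      ((Real.exp ε - 1) / (x * (Real.exp ε - 1) + k)
        - ε * Real.exp ε * k / (x * (Real.exp ε - 1) + k) ^ 2) x := by
  have hE : (1 : ℝ) < Real.exp ε := by
    rw [← Real.exp_zero]; exact Real.exp_lt_exp.mpr hε
  set E := Real.exp ε with hEdef
  set A : ℝ := E - 1 with hA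
  have hApos : 0 < A := by simp [hA]; linarith
  have hk1 : (1:ℝ) ≤ (k:ℝ) := by exact_mod_cast hk
  have hDpos : 0 < x * A + k := by nlinarith
  have h1 : HasDerivAt (fun y : ℝ => y * A + (k:ℝ)) A x := by
    simpa using ((hasDerivAt_id x).mul_const A).add_const (k:ℝ)
  have hlog : HasDerivAt (fun y : ℝ => Real.log (y * A + k)) (A / (x * A + k)) x :=
    h1.log hDpos.ne'
  have hnum : HasDerivAt (fun y : ℝ => y * ε * E) (ε * E) x := by
    simpa [mul_assoc] using (hasDerivAt_id x).mul_const (ε * E)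
  have hdiv : HasDerivAt (fun y : ℝ => y * ε * E / (y * A + k))
      ((ε * E * (x * A + k) - x * ε * E * A) / (x * A + k) ^ 2) x := hnum.div h1 hDpos.ne'
  have := hlog.sub hdiv
  convert this using 1
  · rfl
  · rfl
  · rfl
  have h2 : ε * E * (x * A + k) - x * ε * E * A = ε * E * k := by ring
  rw [h2]

lemma hR_cont (k : ℕ) (hk : 1 ≤ k) {ε : ℝ} (hε : 0 < ε) {s : Set ℝ} (hs : s ⊆ Set.Ici 0) :
    ContinuousOn (hR k ε) s :=
  fun x hx => ((hasDerivAt_hR k hk hε (hs hx)).continuousAt).continuousWithinAt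

lemma hR_anti (k : ℕ) (hk : 1 ≤ k) {ε : ℝ} (hε : 0 < ε) {l : ℝ} (hl0 : 0 ≤ l)
    (hl : l * (Real.exp ε - 1) ^ 2 = k * (ε * Real.exp ε - (Real.exp ε - 1))) :
    AntitoneOn (hR k ε) (Set.Icc 0 l) := by
  have hE : (1 : ℝ) < Real.exp ε := by
    rw [← Real.exp_zero]; exact Real.exp_lt_exp.mpr hε
  set E := Real.exp ε with hEdef
  have hApos : 0 < E - 1 := by linarith
  have hk1 : (1:ℝ) ≤ (k:ℝ) := by exact_mod_cast hk
  refine antitoneOn_of_deriv_nonpos (convex_Icc 0 l)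
      (hR_cont k hk hε (fun x hx => hx.1)) ?_ ?_
  · intro x hx
    rw [interior_Icc] at hx
    exact ((hasDerivAt_hR k hk hε (le_of_lt hx.1)).differentiableAt).differentiableWithinAt
  · intro x hx
    rw [interior_Icc] at hx
    obtain ⟨hx0, hxl⟩ := hx
    rw [(hasDerivAt_hR k hk hε (le_of_lt hx0)).deriv]
    have hDpos : 0 < x * (E - 1) + k := by nlinarith
    have key : (E - 1) * (x * (E - 1) + k) ≤ ε * E * k := by
      nlinarith [mul_le_mul_of_nonneg_right hxl.le (sq_nonneg (E - 1))]
    rw [sub_nonpos, div_le_div_iff₀ hDpos (by positivity)]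
    nlinarith [mul_le_mul_of_nonneg_right key hDpos.le]
  
lemma hR_mono (k : ℕ) (hk : 1 ≤ k) {ε : ℝ} (hε : 0 < ε) {l : ℝ} (hl0 : 0 ≤ l)
    (hl : l * (Real.exp ε - 1) ^ 2 = k * (ε * Real.exp ε - (Real.exp ε - 1))) :
    MonotoneOn (hR k ε) (Set.Ici l) := by
  have hE : (1 : ℝ) < Real.exp ε := by
    rw [← Real.exp_zero]; exact Real.exp_lt_exp.mpr hε
  set E := Real.exp ε with hEdef
  have hApos : 0 < E - 1 := by linarith
  have hk1 : (1:ℝ) ≤ (k:ℝ) := by exact_mod_cast hk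
  refine monotoneOn_of_deriv_nonneg (convex_Ici l)
      (hR_cont k hk hε (fun x hx => le_trans hl0 hx)) ?_ ?_
  · intro x hx
    rw [interior_Ici] at hx
    exact ((hasDerivAt_hR k hk hε (le_of_lt (lt_of_le_of_lt hl0 hx))).differentiableAt).differentiableWithinAt
  · intro x hx
    rw [interior_Ici] at hx
    have hx0 : 0 ≤ x := le_of_lt (lt_of_le_of_lt hl0 hx)
    have hxl : l ≤ x := le_of_lt hx
    rw [(hasDerivAt_hR k hk hε hx0).deriv]
    have hDpos : 0 < x * (E - 1) + k := by nlinarith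
    have key : ε * E * k ≤ (E - 1) * (x * (E - 1) + k) := by
      nlinarith [mul_le_mul_of_nonneg_right hxl (sq_nonneg (E - 1))]
    rw [sub_nonneg, div_le_div_iff₀ (by positivity) hDpos]
    nlinarith [mul_le_mul_of_nonneg_right key hDpos.le]

lemma l_nonneg {ε : ℝ} (hε : 0 < ε) : 0 ≤ ε * Real.exp ε - (Real.exp ε - 1) := by
  have h1 : -ε + 1 ≤ Real.exp (-ε) := Real.add_one_le_exp (-ε)
  have h2 : Real.exp ε * Real.exp (-ε) = 1 := by rw [← Real.exp_add]; simp
  nlinarith [mul_le_mul_of_nonneg_left h1 (Real.exp_pos ε).le]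

lemma hR_ge_min (k : ℕ) (hk : 1 ≤ k) {ε : ℝ} (hε : 0 < ε) {l : ℝ}
    (hl : l = (k : ℝ) * (Real.exp ε * (ε - 1) + 1) / (Real.exp ε - 1) ^ 2)
    (s : ℕ) (hs : s ≤ k) :
    min (Hent (keyDist k ⌈l⌉₊ ε)) (Hent (keyDist k ⌊l⌋₊ ε)) ≤ hR k ε s := by
  have hE : (1 : ℝ) < Real.exp ε := by
    rw [← Real.exp_zero]; exact Real.exp_lt_exp.mpr hε
  set E := Real.exp ε with hEdef
  have hApos : 0 < E - 1 := by linarith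
  have hk1 : (1:ℝ) ≤ (k:ℝ) := by exact_mod_cast hk
  have hnum : E * (ε - 1) + 1 = ε * E - (E - 1) := by ring
  have hl' : l * (E - 1) ^ 2 = k * (ε * E - (E - 1)) := by
    rw [hl, hnum]; field_simp
  have hl0 : 0 ≤ l := by
    rw [hl, hnum]
    have := l_nonneg hε
    positivity
  have hlk : l ≤ k := by
    have hεE : ε ≤ E - 1 := by
      have := Real.add_one_le_exp ε; linarith
    have : l * (E-1)^2 ≤ (k:ℝ) * (E-1)^2 := by
      rw [hl']
      have : ε * E - (E - 1) ≤ (E-1)^2 := by nlinarith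
      nlinarith
    exact (mul_le_mul_iff_of_pos_right (pow_pos hApos 2)).mp this
  have hceil : (⌈l⌉₊ : ℕ) ≤ k := by
    rw [Nat.ceil_le]; exact_mod_cast hlk
  have hfloor : (⌊l⌋₊ : ℕ) ≤ k := le_trans (Nat.floor_le_ceil l) hceil
  rcases le_or_gt (s : ℝ) l with hcase | hcase
  · have h1 : (s : ℕ) ≤ ⌊l⌋₊ := Nat.le_floor hcase
    have h2 : hR k ε ⌊l⌋₊ ≤ hR k ε s := by
      apply hR_anti k hk hε hl0 hl' ⟨by positivity, hcase⟩
        ⟨by positivity, Nat.floor_le hl0⟩ (by exact_mod_cast h1)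
    rw [keyEnt k ⌊l⌋₊ hk hfloor hε]
    exact le_trans (min_le_right _ _) h2
  · have h1 : (⌈l⌉₊ : ℕ) ≤ s := Nat.ceil_le.mpr hcase.le
    have h2 : hR k ε ⌈l⌉₊ ≤ hR k ε s := by
      apply hR_mono k hk hε hl0 hl' (Nat.le_ceil l) (le_trans (Nat.le_ceil l) (by exact_mod_cast h1))
        (by exact_mod_cast h1)
    rw [keyEnt k ⌈l⌉₊ hk hceil hε]
    exact le_trans (min_le_left _ _) h2

lemma exists_minimizer (k : ℕ) (hk : 1 ≤ k) {ε : ℝ} (hε : 0 < ε) :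
    ∃ p : Fin k → ℝ, (IsDist p ∧ ∀ a b, p a ≤ Real.exp ε * p b) ∧
      ∀ q : Fin k → ℝ, IsDist q → (∀ a b, q a ≤ Real.exp ε * q b) → Hent p ≤ Hent q := by
  have hE : (1 : ℝ) ≤ Real.exp ε := by
    rw [← Real.exp_zero]; exact Real.exp_le_exp.mpr hε.le
  set E := Real.exp ε with hEdef
  set K : Set (Fin k → ℝ) := {q | IsDist q ∧ ∀ a b, q a ≤ E * q b} with hK
  have hKclosed : IsClosed K := by
    have : K = (⋂ a, {q : Fin k → ℝ | 0 ≤ q a}) ∩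
        ({q : Fin k → ℝ | ∑ a, q a = 1} ∩ ⋂ a, ⋂ b, {q : Fin k → ℝ | q a ≤ E * q b}) := by
      ext q
      simp only [hK, Set.mem_inter_iff, Set.mem_iInter, Set.mem_setOf_eq, IsDist]
      tauto
    rw [this]
    refine IsClosed.inter (isClosed_iInter fun a => isClosed_le continuous_const
        (continuous_apply a)) (IsClosed.inter ?_ ?_)
    · exact isClosed_eq (continuous_finset_sum _ fun a _ => continuous_apply a) continuous_const
    · exact isClosed_iInter fun a => isClosed_iInter fun b =>
        isClosed_le (continuous_apply a) (continuous_const.mul (continuous_apply b))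
  have hKsub : K ⊆ Set.pi Set.univ fun _ : Fin k => Set.Icc (0:ℝ) 1 := by
    intro q hq a _
    refine ⟨hq.1.1 a, ?_⟩
    calc q a ≤ ∑ b, q b := Finset.single_le_sum (fun b _ => hq.1.1 b) (Finset.mem_univ a)
    _ = 1 := hq.1.2
  have hKcompact : IsCompact K :=
    IsCompact.of_isClosed_subset (isCompact_univ_pi fun _ => isCompact_Icc) hKclosed hKsub
  have hKne : K.Nonempty := by
    refine ⟨fun _ => 1/k, ⟨⟨fun _ => by positivity, ?_⟩, fun a b => ?_⟩⟩
    · rw [Finset.sum_const, Finset.card_univ, Fintype.card_fin, nsmul_eq_mul]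
      have : (k:ℝ) ≠ 0 := by positivity
      field_simp
    · have : (0:ℝ) ≤ 1/k := by positivity
      nlinarith
  have hcont : Continuous fun q : Fin k → ℝ => Hent q := by
    have : (fun q : Fin k → ℝ => Hent q) = fun q => ∑ a, Real.negMulLog (q a) := by
      funext q; exact Hent_eq q
    rw [this]
    exact continuous_finset_sum _ fun a _ => Real.continuous_negMulLog.comp (continuous_apply a)
  obtain ⟨p, hpK, hpmin⟩ := hKcompact.exists_isMinOn hKne hcont.continuousOn
  exact ⟨p, hpK, fun q hq1 hq2 => hpmin ⟨hq1, hq2⟩⟩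

lemma half_add_half (x y : ℝ) (hx : 0 ≤ x) (hy : 0 ≤ y) :
    Real.negMulLog x / 2 + Real.negMulLog y / 2 ≤ Real.negMulLog (x/2 + y/2) := by
  have := Real.concaveOn_negMulLog.2 (Set.mem_Ici.mpr hx) (Set.mem_Ici.mpr hy)
    (by norm_num : (0:ℝ) ≤ 1/2) (by norm_num : (0:ℝ) ≤ 1/2) (by norm_num)
  simp only [smul_eq_mul] at this
  calc Real.negMulLog x / 2 + Real.negMulLog y / 2
      = 1/2 * Real.negMulLog x + 1/2 * Real.negMulLog y := by ring
    _ ≤ Real.negMulLog (1/2 * x + 1/2 * y) := this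
    _ = Real.negMulLog (x/2 + y/2) := by ring_nf

lemma half_add_half_strict (x y : ℝ) (hx : 0 ≤ x) (hy : 0 ≤ y) (hxy : x ≠ y) :
    Real.negMulLog x / 2 + Real.negMulLog y / 2 < Real.negMulLog (x/2 + y/2) := by
  have := Real.strictConcaveOn_negMulLog.2 (Set.mem_Ici.mpr hx) (Set.mem_Ici.mpr hy) hxy
    (by norm_num : (0:ℝ) < 1/2) (by norm_num : (0:ℝ) < 1/2) (by norm_num)
  simp only [smul_eq_mul] at this
  calc Real.negMulLog x / 2 + Real.negMulLog y / 2
      = 1/2 * Real.negMulLog x + 1/2 * Real.negMulLog y := by ring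
    _ < Real.negMulLog (1/2 * x + 1/2 * y) := this
    _ = Real.negMulLog (x/2 + y/2) := by ring_nf

lemma minimizer_value (k : ℕ) (hk : 1 ≤ k) {ε : ℝ} (hε : 0 < ε)
    (p : Fin k → ℝ) (hp1 : IsDist p) (hp2 : ∀ a b, p a ≤ Real.exp ε * p b)
    (hmin : ∀ q : Fin k → ℝ, IsDist q → (∀ a b, q a ≤ Real.exp ε * q b) → Hent p ≤ Hent q) :
    ∃ s : ℕ, s ≤ k ∧ Hent p = hR k ε s := by
  have hE : (1:ℝ) < Real.exp ε := by
    rw [← Real.exp_zero]; exact Real.exp_lt_exp.mpr hε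
  set E := Real.exp ε with hEdef
  have hk1 : (1:ℝ) ≤ (k:ℝ) := by exact_mod_cast hk
  obtain ⟨a0, -, hm⟩ : ∃ a ∈ (univ : Finset (Fin k)), ∀ b ∈ univ, p a ≤ p b :=
    Finset.exists_min_image univ p ⟨⟨0, hk⟩, mem_univ _⟩
  set m := p a0 with hmdef
  have hma : ∀ a, m ≤ p a := fun a => hm a (mem_univ a)
  have hub : ∀ a, p a ≤ E * m := fun a => hp2 a a0
  have hm0 : 0 < m := by
    by_contra h
    push_neg at h
    have h1 : ∑ a, p a ≤ ∑ _a : Fin k, E * m := Finset.sum_le_sum fun a _ => hub a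
    rw [hp1.2, Finset.sum_const, Finset.card_univ, Fintype.card_fin, nsmul_eq_mul] at h1
    have h2 : (k:ℝ) * (E * m) ≤ 0 := mul_nonpos_of_nonneg_of_nonpos (by positivity)
      (mul_nonpos_of_nonneg_of_nonpos (by positivity) h)
    linarith
  have mEm : m < E * m := by nlinarith
  by_cases hall : ∀ i, p i = m ∨ p i = E * m
  · -- two-valued: count and compute
    set s : ℕ := (univ.filter fun a => p a = E*m).card with hs
    have hfilter : (univ.filter fun a => ¬ p a = E*m) = (univ.filter fun a => p a = m) := by
      apply Finset.filter_congr
      intro a _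
      rcases hall a with h | h <;> simp [h, mEm.ne, mEm.ne']
    have hcards : s + (univ.filter fun a => p a = m).card = k := by
      have h := Finset.card_filter_add_card_filter_not
        (s := (univ : Finset (Fin k))) (p := fun a => p a = E*m)
      rw [hfilter, Finset.card_univ, Fintype.card_fin] at h
      omega
    have hsk : s ≤ k := by omega
    have hcard1 : ((univ.filter fun a => p a = m).card : ℕ) = k - s := by omega
    have hsplit : ∀ g : ℝ → ℝ, ∑ a, g (p a) = ((k - s:ℕ):ℝ) * g m + (s:ℝ) * g (E*m) := by
      intro g
      rw [← Finset.sum_filter_add_sum_filter_not univ (fun a => p a = E*m) (fun a => g (p a)),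
        hfilter]
      rw [Finset.sum_congr rfl (fun a ha => by rw [(Finset.mem_filter.mp ha).2] :
          ∀ a ∈ univ.filter fun a => p a = E*m, g (p a) = g (E*m)),
        Finset.sum_congr rfl (fun a ha => by rw [(Finset.mem_filter.mp ha).2] :
          ∀ a ∈ univ.filter fun a => p a = m, g (p a) = g m)]
      rw [Finset.sum_const, Finset.sum_const, nsmul_eq_mul, nsmul_eq_mul, hcard1, ← hs]
      ring
    have hm_eq : ((k - s:ℕ):ℝ) * m + (s:ℝ) * (E*m) = 1 := by
      have := hsplit id
      simp only [id] at this
      rw [← this, hp1.2]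
    exact ⟨s, hsk, by rw [Hent_eq, hsplit Real.negMulLog]; exact twoVal k s hk hsk hε m hm_eq⟩
  · -- impossible: perturbation
    exfalso
    push_neg at hall
    obtain ⟨i, hi1, hi2⟩ := hall
    have him : m < p i := lt_of_le_of_ne (hma i) (Ne.symm hi1)
    have hiM : p i < E * m := lt_of_le_of_ne (hub i) hi2
    set n1 : ℕ := (univ.filter fun a => p a = m).card with hn1
    set n2 : ℕ := (univ.filter fun a => p a = E * m).card with hn2
    set c : ℝ := n1 + E * n2 with hc
    have hn1pos : 1 ≤ n1 :=
      hn1 ▸ Finset.card_pos.mpr ⟨a0, Finset.mem_filter.mpr ⟨mem_univ a0, rfl⟩⟩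
    clear_value n1 n2
    have hcpos : (1:ℝ) ≤ c := by
      have h1 : (1:ℝ) ≤ (n1:ℝ) := by exact_mod_cast hn1pos
      have h2 : (0:ℝ) ≤ E * n2 := by positivity
      rw [hc]; linarith
    clear_value c
    set d : Fin k → ℝ := fun a =>
      (if p a = m then (1:ℝ) else 0) + (if p a = E*m then E else 0)
        + (if a = i then -c else 0) with hd
    clear_value d
    have hdsum : ∑ a, d a = 0 := by
      rw [hd]
      rw [Finset.sum_add_distrib, Finset.sum_add_distrib, Finset.sum_ite_eq' univ i fun _ => -c]
      rw [Finset.sum_ite, Finset.sum_ite]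
      simp only [Finset.sum_const, Finset.sum_const_zero, nsmul_eq_mul, mul_one,
        if_pos (mem_univ i), add_zero, ← hn1, ← hn2, hc]
      ring
    set F : Fin k → ℝ := fun a =>
      if p a = m ∨ p a = E*m then m/2
      else min ((p a - m)/(c+1)) ((E*m - p a)/(c+E)) with hF
    clear_value F
    have hFpos : ∀ a, 0 < F a := by
      intro a
      rw [hF]
      dsimp only
      split
      · linarith
      · next h =>
        push_neg at h
        obtain ⟨h1, h2⟩ := h
        have e1 := lt_of_le_of_ne (hma a) (Ne.symm h1)
        have e2 := lt_of_le_of_ne (hub a) h2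
        apply lt_min <;> apply div_pos <;> linarith
    set t0 : ℝ := univ.inf' (⟨i, mem_univ i⟩ : (univ : Finset (Fin k)).Nonempty) F with ht0def
    have ht0pos : 0 < t0 := by
      rw [ht0def]; exact (Finset.lt_inf'_iff _).2 fun a _ => hFpos a
    have ht0le : ∀ a, t0 ≤ F a := fun a => ht0def ▸ Finset.inf'_le F (mem_univ a)
    clear_value t0
    have ht0m : t0 ≤ m/2 := by
      have h := ht0le a0
      rw [hF] at h
      simpa only [if_pos (Or.inl hmdef.symm)] using h
    have hbounds : ∀ t : ℝ, |t| ≤ t0 → ∀ a,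
        m + t ≤ p a + t * d a ∧ p a + t * d a ≤ E * (m + t) := by
      intro t ht a
      obtain ⟨htge, htle⟩ := abs_le.mp ht
      have hmtpos : 0 < m + t := by linarith
      have hgrow : m + t ≤ E * (m + t) := by
        have := mul_le_mul_of_nonneg_right hE.le hmtpos.le
        linarith
      by_cases h1 : p a = m
      · have hane : a ≠ i := fun h => hi1 (h ▸ h1)
        have hda : d a = 1 := by
          rw [hd]; simp only [if_pos h1, if_neg hane,
            if_neg (show ¬ p a = E*m by rw [h1]; exact mEm.ne)]; ring
        rw [hda, h1]
        constructor
        · linarith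
        · linarith [hgrow]
      · by_cases h2 : p a = E*m
        · have hane : a ≠ i := fun h => hi2 (h ▸ h2)
          have hda : d a = E := by
            rw [hd]; simp only [if_pos h2, if_neg hane, if_neg h1]; ring
          rw [hda, h2]
          constructor
          · nlinarith [hgrow]
          · nlinarith [le_refl (E*(m+t))]
        · have hFa := ht0le a
          rw [hF] at hFa
          simp only [if_neg (show ¬(p a = m ∨ p a = E*m) from by tauto)] at hFa
          have hb1 : t0 * (c+1) ≤ p a - m := by
            have := le_trans hFa (min_le_left _ _)
            rwa [le_div_iff₀ (by linarith)] at this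
          have hb2 : t0 * (c+E) ≤ E*m - p a := by
            have := le_trans hFa (min_le_right _ _)
            rwa [le_div_iff₀ (by linarith)] at this
          have hc0 : (0:ℝ) ≤ c := by linarith
          have h4 : E * (-t0) ≤ E * t := mul_le_mul_of_nonneg_left htge (by positivity)
          have h5 : t0 * E ≤ t0 * (c + E) :=
            mul_le_mul_of_nonneg_left (by linarith) ht0pos.le
          have h6 : (0:ℝ) ≤ t0 * c := mul_nonneg ht0pos.le hc0
          have h7 : t * c ≤ t0 * c := mul_le_mul_of_nonneg_right htle hc0
          have h8 : -(t0 * c) ≤ t * c := by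
            have := mul_le_mul_of_nonneg_right htge hc0
            linarith [this]
          have hb1' : t0 * c + t0 ≤ p a - m := by linarith [hb1]
          have hb2' : t0 * c + t0 * E ≤ E * m - p a := by linarith [hb2]
          by_cases h3 : a = i
          · have hda : d a = -c := by
              rw [hd]; simp only [if_neg h1, if_neg h2, if_pos h3]; ring
            rw [hda]
            constructor
            · linarith [hb1']
            · linarith [hb2']
          · have hda : d a = 0 := by
              rw [hd]; simp only [if_neg h1, if_neg h2, if_neg h3]; ring
            rw [hda]
            constructor
            · linarith [hb1']
            · linarith [hb2']
    have hfeas : ∀ t : ℝ, |t| ≤ t0 → IsDist (fun a => p a + t * d a) ∧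
        ∀ a b, p a + t * d a ≤ E * (p b + t * d b) := by
      intro t ht
      have hb := hbounds t ht
      obtain ⟨htge, htle⟩ := abs_le.mp ht
      have hmt : 0 < m + t := by linarith
      refine ⟨⟨fun a => le_trans hmt.le (hb a).1, ?_⟩, fun a b => ?_⟩
      · rw [Finset.sum_add_distrib, hp1.2, ← Finset.mul_sum, hdsum, mul_zero, add_zero]
      · calc p a + t * d a ≤ E * (m + t) := (hb a).2
          _ ≤ E * (p b + t * d b) := mul_le_mul_of_nonneg_left (hb b).1 (by positivity)
    have habs : |t0| ≤ t0 := by rw [abs_of_pos ht0pos]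
    have habs' : |(-t0)| ≤ t0 := by rw [abs_neg, abs_of_pos ht0pos]
    have hplus := hmin _ (hfeas t0 habs).1 (hfeas t0 habs).2
    have hminus := hmin _ (hfeas (-t0) habs').1 (hfeas (-t0) habs').2
    have hnonneg : ∀ t (ht : |t| ≤ t0) a, 0 ≤ p a + t * d a :=
      fun t ht a => ((hfeas t ht).1).1 a
    have hdi : d i = -c := by
      rw [hd]; simp [hi1, hi2]
    have hneq : p i + t0 * d i ≠ p i + (-t0) * d i := by
      rw [hdi]
      intro h
      have : t0 * c = 0 := by linarith
      rcases mul_eq_zero.mp this with h' | h' <;> linarith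
    have hlt : ∑ a, Real.negMulLog (p a) >
        ∑ a, (Real.negMulLog (p a + t0 * d a) / 2 + Real.negMulLog (p a + (-t0) * d a) / 2) := by
      apply Finset.sum_lt_sum
      · intro a _
        have := half_add_half (p a + t0 * d a) (p a + (-t0) * d a)
          (hnonneg t0 habs a) (hnonneg (-t0) habs' a)
        have heq : (p a + t0 * d a)/2 + (p a + (-t0) * d a)/2 = p a := by ring
        rwa [heq] at this
      · refine ⟨i, mem_univ i, ?_⟩
        have := half_add_half_strict (p i + t0 * d i) (p i + (-t0) * d i)
          (hnonneg t0 habs i) (hnonneg (-t0) habs' i) hneq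
        have heq : (p i + t0 * d i)/2 + (p i + (-t0) * d i)/2 = p i := by ring
        rwa [heq] at this
    rw [Finset.sum_add_distrib, ← Finset.sum_div, ← Finset.sum_div] at hlt
    simp only [Hent_eq] at hplus hminus
    linarith [hlt]

lemma entropy_lb (k : ℕ) (hk : 1 ≤ k) {ε : ℝ} (hε : 0 < ε) {l : ℝ}
    (hl : l = (k : ℝ) * (Real.exp ε * (ε - 1) + 1) / (Real.exp ε - 1) ^ 2)
    (q : Fin k → ℝ) (hq : IsDist q) (hDPq : ∀ a b, q a ≤ Real.exp ε * q b) :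
    min (Hent (keyDist k ⌈l⌉₊ ε)) (Hent (keyDist k ⌊l⌋₊ ε)) ≤ Hent q := by
  obtain ⟨p, ⟨hp1, hp2⟩, hpmin⟩ := exists_minimizer k hk hε
  obtain ⟨s, hsk, hval⟩ := minimizer_value k hk hε p hp1 hp2 hpmin
  calc min (Hent (keyDist k ⌈l⌉₊ ε)) (Hent (keyDist k ⌊l⌋₊ ε))
      ≤ hR k ε s := hR_ge_min k hk hε hl s hsk
    _ = Hent p := hval.symm
    _ ≤ Hent q := hpmin q hq hDPq

lemma sum_cons (k T : ℕ) (f : (Fin (T+1) → Fin k) → ℝ) :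
    ∑ a : Fin k, ∑ y : Fin T → Fin k, f (Fin.cons a y) = ∑ x, f x := by
  rw [← Equiv.sum_comp (Fin.consEquiv fun _ => Fin k) f, Fintype.sum_prod_type]
  rfl

lemma neighbor_cons_left {k T : ℕ} (a b : Fin k) (y : Fin T → Fin k) (hab : a ≠ b) :
    Neighbor (Fin.cons a y) (Fin.cons b y) := by
  refine ⟨0, by simpa using hab, fun s hs => ?_⟩
  obtain ⟨j, rfl⟩ : ∃ j : Fin T, s = j.succ := ⟨s.pred hs, (Fin.succ_pred s hs).symm⟩
  simp

lemma neighbor_cons_right {k T : ℕ} (a : Fin k) (y y' : Fin T → Fin k)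
    (h : Neighbor y y') : Neighbor (Fin.cons a y) (Fin.cons a y') := by
  obtain ⟨t, ht1, ht2⟩ := h
  refine ⟨t.succ, by simpa using ht1, fun s hs => ?_⟩
  rcases eq_or_ne s 0 with rfl | hs0
  · simp
  · obtain ⟨j, rfl⟩ : ∃ j : Fin T, s = j.succ := ⟨s.pred hs0, (Fin.succ_pred s hs0).symm⟩
    simp only [Fin.cons_succ]
    exact ht2 j (fun h => hs (by rw [h]))

lemma chain_bound (k : ℕ) {ε : ℝ} (hε : 0 < ε) (c : ℝ)
    (hc : ∀ q : Fin k → ℝ, IsDist q → (∀ a b, q a ≤ Real.exp ε * q b) → c ≤ Hent q) :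
    ∀ T (P : (Fin T → Fin k) → ℝ), IsDist P →
      (∀ x x', Neighbor x x' → P x ≤ Real.exp ε * P x') → (T:ℝ) * c ≤ Hent P := by
  have hE1 : (1:ℝ) ≤ Real.exp ε := by
    rw [← Real.exp_zero]; exact Real.exp_le_exp.mpr hε.le
  intro T
  induction T with
  | zero =>
    intro P hP _
    have h1 : P default = 1 := by rw [← hP.2, Fintype.sum_unique]
    rw [Hent_eq, Fintype.sum_unique, h1]
    simp
  | succ T ih =>
    intro P hP hDP
    set q : Fin k → ℝ := fun a => ∑ y : Fin T → Fin k, P (Fin.cons a y) with hqdef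
    have hq0 : ∀ a, 0 ≤ q a := fun a => Finset.sum_nonneg fun y _ => hP.1 _
    have hq : IsDist q := by
      refine ⟨hq0, ?_⟩
      rw [hqdef]
      rw [sum_cons k T P]
      exact hP.2
    have hqDP : ∀ a b, q a ≤ Real.exp ε * q b := by
      intro a b
      rcases eq_or_ne a b with rfl | hab
      · nlinarith [hq0 a, hE1]
      · rw [hqdef, Finset.mul_sum]
        exact Finset.sum_le_sum fun y _ => hDP _ _ (neighbor_cons_left a b y hab)
    set r : Fin k → (Fin T → Fin k) → ℝ := fun a y => P (Fin.cons a y) / q a with hrdef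
    have hkey : ∀ a, ∑ y, Real.negMulLog (P (Fin.cons a y))
        = Real.negMulLog (q a) + q a * Hent (r a) := by
      intro a
      rcases eq_or_ne (q a) 0 with h0 | h0
      · have hz : ∀ y, P (Fin.cons a y) = 0 := by
          have := (Finset.sum_eq_zero_iff_of_nonneg (fun y _ => hP.1 (Fin.cons a y))).mp h0
          exact fun y => this y (mem_univ y)
        rw [h0]
        simp [hz]
      · have hfac : ∀ y, P (Fin.cons a y) = q a * r a y := by
          intro y
          rw [hrdef]
          field_simp
        have hrsum : ∑ y, r a y = 1 := by
          rw [hrdef, ← Finset.sum_div]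
          field_simp
          rfl
        rw [Finset.sum_congr rfl fun y _ => by rw [hfac y]]
        rw [Finset.sum_congr rfl fun y _ => Real.negMulLog_mul (q a) (r a y)]
        rw [Finset.sum_add_distrib, ← Finset.sum_mul, hrsum, ← Finset.mul_sum, Hent_eq]
        ring
    have hrent : ∀ a, q a * ((T:ℝ) * c) ≤ q a * Hent (r a) := by
      intro a
      rcases eq_or_ne (q a) 0 with h0 | h0
      · rw [h0]; ring_nf; exact le_refl _
      · have hqa : 0 < q a := lt_of_le_of_ne (hq0 a) (Ne.symm h0)
        have hr1 : IsDist (r a) := by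
          refine ⟨fun y => div_nonneg (hP.1 _) hqa.le, ?_⟩
          rw [hrdef, ← Finset.sum_div]
          field_simp
          rfl
        have hr2 : ∀ y y', Neighbor y y' → r a y ≤ Real.exp ε * r a y' := by
          intro y y' hyy
          rw [hrdef]
          dsimp only
          rw [div_le_iff₀ hqa, mul_assoc, div_mul_cancel₀ _ h0]
          exact hDP _ _ (neighbor_cons_right a y y' hyy)
        exact mul_le_mul_of_nonneg_left (ih (r a) hr1 hr2) hqa.le
    have hchain : Hent P = Hent q + ∑ a, q a * Hent (r a) := by
      rw [Hent_eq, ← sum_cons k T, Hent_eq]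
      rw [Finset.sum_congr rfl fun a _ => hkey a, Finset.sum_add_distrib]
    rw [hchain]
    have h1 : c ≤ Hent q := hc q hq hqDP
    have h2 : ∑ a, q a * ((T:ℝ) * c) ≤ ∑ a, q a * Hent (r a) :=
      Finset.sum_le_sum fun a _ => hrent a
    rw [← Finset.sum_mul, hq.2, one_mul] at h2
    push_cast
    linarith

end S16

/-- **Entropy lower bound via Lemma 6.2 of the paper:** every `ε`-DP distribution on
`[k]^T` (ratio at most `e^ε` between neighboring databases) has Shannon entropy at least
`T · min_{s ∈ {⌈l⌉,⌊l⌋}} H(q^s)`, with `l = k(e^ε(ε−1)+1)/(e^ε−1)²`. -/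
theorem stmt16 (k T : ℕ) (hk : 2 ≤ k) (hT : 1 ≤ T) (ε : ℝ) (hε : 0 < ε)
    (l : ℝ) (hl : l = (k : ℝ) * (Real.exp ε * (ε - 1) + 1) / (Real.exp ε - 1) ^ 2)
    (P : (Fin T → Fin k) → ℝ) (hP : IsDist P)
    (hDP : ∀ x x', Neighbor x x' → P x ≤ Real.exp ε * P x') :
    (T : ℝ) * min (Hent (keyDist k ⌈l⌉₊ ε)) (Hent (keyDist k ⌊l⌋₊ ε)) ≤ Hent P := by
  have hk1 : 1 ≤ k := le_trans (by norm_num) hk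
  exact S16.chain_bound k hε _
    (fun q hq hDPq => S16.entropy_lb k hk1 hε hl q hq hDPq) T P hP hDP
end

section
/- Fix ε > 0 and a real k > 0, and define g : [0,k] → ℝ by g(s) = log(s(e^ε−1)+k) − s ε e^ε/(s(e^ε−1)+k). Then: (i) g(0) = g(k) = log k; (ii) s̃ = k(e^ε(ε−1)+1)/(e^ε−1)² lies strictly between 0 and k; (iii) s̃ is the unique critical point of g in (0,k), i.e., the unique s ∈ (0,k) with g′(s) = 0; and (iv) g attains its minimum over [0,k] at s̃. -/
/-- **Equations (5.4)–(5.5) of the paper (calculus fact):** for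
`g(s) = log(s(e^ε−1)+k) − sεe^ε/(s(e^ε−1)+k)` on `[0,k]`,
(i) `g(0) = g(k) = log k`; (ii) `s̃ = k(e^ε(ε−1)+1)/(e^ε−1)²` lies strictly in `(0,k)`;
(iii) `s̃` is the unique critical point of `g` in `(0,k)`; and
(iv) `g` attains its minimum over `[0,k]` at `s̃`. -/
theorem stmt17 (ε k : ℝ) (hε : 0 < ε) (hk : 0 < k)
    (g : ℝ → ℝ)
    (hg : ∀ s, g s = Real.log (s * (Real.exp ε - 1) + k) -
      s * ε * Real.exp ε / (s * (Real.exp ε - 1) + k))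
    (st : ℝ) (hst : st = k * (Real.exp ε * (ε - 1) + 1) / (Real.exp ε - 1) ^ 2) :
    g 0 = Real.log k ∧ g k = Real.log k ∧
    0 < st ∧ st < k ∧
    deriv g st = 0 ∧
    (∀ s ∈ Set.Ioo (0 : ℝ) k, deriv g s = 0 → s = st) ∧
    (∀ s ∈ Set.Icc (0 : ℝ) k, g st ≤ g s) := by
  set e := Real.exp ε with he
  have hepos : 0 < e := Real.exp_pos ε
  have he1 : 1 < e := by
    calc (1:ℝ) = Real.exp 0 := Real.exp_zero.symm
    _ < e := Real.exp_lt_exp.mpr hε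
  set a := e - 1 with ha
  have ha0 : 0 < a := by simp only [ha]; linarith
  have hee : ε + 1 < e := by
    have := Real.add_one_lt_exp (ne_of_gt hε); rw [← he] at this; linarith
  -- numerator positivity
  have hnum : 0 < e * (ε - 1) + 1 := by
    have h2 : -ε + 1 < Real.exp (-ε) := Real.add_one_lt_exp (by linarith)
    have h3 : e * Real.exp (-ε) = 1 := by rw [he, ← Real.exp_add]; simp
    nlinarith [mul_lt_mul_of_pos_left h2 hepos]
  have hst0 : 0 < st := by
    rw [hst]; exact div_pos (mul_pos hk hnum) (by positivity)
  have hstk : st < k := by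
    rw [hst, ha, div_lt_iff₀ (by positivity)]
    nlinarith [mul_pos (mul_pos hk hepos) (show (0:ℝ) < e - 1 - ε by linarith)]
  -- positivity of the denominator
  have hD : ∀ s : ℝ, 0 ≤ s → 0 < s * a + k := fun s hs =>
    add_pos_of_nonneg_of_pos (mul_nonneg hs ha0.le) hk
  -- the derivative
  have hderiv : ∀ s : ℝ, 0 ≤ s → HasDerivAt g (a ^ 2 * (s - st) / (s * a + k) ^ 2) s := by
    intro s hs
    have hDs := hD s hs
    have h1 : HasDerivAt (fun x : ℝ => x * a + k) a s := by
      simpa using ((hasDerivAt_id s).mul_const a).add_const k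
    have h2 : HasDerivAt (fun x : ℝ => Real.log (x * a + k)) (a / (s * a + k)) s :=
      h1.log hDs.ne'
    have h3 : HasDerivAt (fun x : ℝ => x * ε * e) (ε * e) s := by
      simpa using ((hasDerivAt_id s).mul_const ε).mul_const e
    have h4 : HasDerivAt (fun x : ℝ => x * ε * e / (x * a + k))
        ((ε * e * (s * a + k) - s * ε * e * a) / (s * a + k) ^ 2) s := h3.div h1 hDs.ne'
    have h5 := h2.sub h4
    have hgf : g = fun x : ℝ => Real.log (x * a + k) - x * ε * e / (x * a + k) := by
      funext x; rw [hg x]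
    rw [hgf]
    refine h5.congr_deriv ?_
    rw [hst]
    field_simp
    ring
  have hderiv' : ∀ s : ℝ, 0 ≤ s → deriv g s = a ^ 2 * (s - st) / (s * a + k) ^ 2 :=
    fun s hs => (hderiv s hs).deriv
  refine ⟨?_, ?_, hst0, hstk, ?_, ?_, ?_⟩
  · rw [hg]; simp
  · have hke : k * a + k = k * e := by rw [ha]; ring
    rw [hg, hke, Real.log_mul hk.ne' hepos.ne', he, Real.log_exp]
    have h6 : k * ε * Real.exp ε / (k * Real.exp ε) = ε := by
      rw [mul_comm k ε, mul_assoc, mul_div_assoc, div_self (by positivity), mul_one]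
    rw [h6]; ring
  · rw [hderiv' st hst0.le]; simp
  · intro s hsI h0
    rw [hderiv' s hsI.1.le] at h0
    have hDs := hD s hsI.1.le
    have := div_eq_zero_iff.mp h0
    rcases this with h | h
    · rcases mul_eq_zero.mp h with h' | h'
      · exact absurd h' (by positivity)
      · linarith
    · exact absurd h (by positivity)
  · have hanti : AntitoneOn g (Set.Icc 0 st) := by
      apply antitoneOn_of_deriv_nonpos (convex_Icc 0 st)
      · exact fun x hx => ((hderiv x hx.1).differentiableAt.continuousAt).continuousWithinAt
      · rw [interior_Icc]
        exact fun x hx => ((hderiv x hx.1.le).differentiableAt).differentiableWithinAt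
      · rw [interior_Icc]
        intro x hx
        rw [hderiv' x hx.1.le]
        apply div_nonpos_of_nonpos_of_nonneg
        · exact mul_nonpos_of_nonneg_of_nonpos (sq_nonneg a) (by linarith [hx.2])
        · exact sq_nonneg _
    have hmono : MonotoneOn g (Set.Icc st k) := by
      apply monotoneOn_of_deriv_nonneg (convex_Icc st k)
      · exact fun x hx => ((hderiv x (hst0.le.trans hx.1)).differentiableAt.continuousAt).continuousWithinAt
      · rw [interior_Icc]
        exact fun x hx => ((hderiv x (hst0.trans hx.1).le).differentiableAt).differentiableWithinAt
      · rw [interior_Icc]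
        intro x hx
        rw [hderiv' x (hst0.trans hx.1).le]
        apply div_nonneg
        · exact mul_nonneg (sq_nonneg a) (by linarith [hx.1])
        · exact sq_nonneg _
    intro s hs
    rcases le_total s st with h | h
    · exact hanti ⟨hs.1, h⟩ ⟨hst0.le, le_refl st⟩ h
    · exact hmono ⟨le_refl st, hstk.le⟩ ⟨h, hs.2⟩ h
end

section
/- Fix ε > 0 and an integer k ≥ 2. Define B = 2^{⌈log₂(min{e^ε, 2k})⌉ − 1}, b = 2^{⌈log₂(k/B + 1)⌉}, K = B·b, and s = b/2. Then the entropy of the key used by the Hadamard Response mechanism, H^{HR} = log(s e^ε + K − s) − ε e^ε s/(s e^ε + K − s), satisfies: H^{HR} ≤ log(2k(3e^ε−1)/e^ε) − ε e^ε/(3e^ε−1) if ε ≤ log(k) + 1, and H^{HR} ≤ log(e^ε + 4k − 1) − ε e^ε/(e^ε + 4k − 1) if ε > log(k) + 1. -/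
open Real

lemma two_rpow_ceil_logb {x : ℝ} (hx : 0 < x) :
    x ≤ (2:ℝ) ^ ((⌈Real.logb 2 x⌉ : ℝ)) ∧ (2:ℝ) ^ ((⌈Real.logb 2 x⌉ : ℝ)) < 2 * x := by
  have h2 : (1:ℝ) < 2 := one_lt_two
  have hx' : (2:ℝ) ^ (Real.logb 2 x) = x := Real.rpow_logb two_pos (by norm_num) hx
  refine ⟨?_, ?_⟩
  · conv_lhs => rw [← hx']
    exact (Real.rpow_le_rpow_left_iff h2).mpr (Int.le_ceil _)
  · have hlt : (2:ℝ) ^ ((⌈Real.logb 2 x⌉ : ℝ)) < (2:ℝ) ^ (Real.logb 2 x + 1) := by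
      refine (Real.rpow_lt_rpow_left_iff h2).mpr ?_
      exact_mod_cast Int.ceil_lt_add_one _
    have heq : (2:ℝ) ^ (Real.logb 2 x + 1) = 2 * x := by
      rw [Real.rpow_add two_pos, hx', Real.rpow_one]; ring
    linarith

lemma aux_mono {x y c : ℝ} (hx : 0 < x) (hxy : x ≤ y) (hc : 0 ≤ c) :
    Real.log x - c / x ≤ Real.log y - c / y := by
  have h1 : Real.log x ≤ Real.log y := Real.log_le_log hx hxy
  have h2 : c / y ≤ c / x := div_le_div_of_nonneg_left hc hx hxy
  linarith

lemma aux_chord {t x : ℝ} (ht : 0 < t) (h1 : t ≤ x) (h2 : x ≤ 2 * t) :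
    Real.log t + (x - t) / t * Real.log 2 ≤ Real.log x := by
  have hcc := strictConcaveOn_log_Ioi.concaveOn
  have h := hcc.2 (Set.mem_Ioi.mpr ht) (Set.mem_Ioi.mpr (show (0:ℝ) < 2 * t by linarith))
    (show (0:ℝ) ≤ (2 * t - x) / t by
      apply div_nonneg (by linarith) ht.le)
    (show (0:ℝ) ≤ (x - t) / t by
      apply div_nonneg (by linarith) ht.le)
    (by field_simp; ring)
  simp only [smul_eq_mul] at h
  have harg : (2 * t - x) / t * t + (x - t) / t * (2 * t) = x := by field_simp; ring
  have hlog2t : Real.log (2 * t) = Real.log 2 + Real.log t :=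
    Real.log_mul two_ne_zero (ne_of_gt ht)
  rw [harg, hlog2t] at h
  have hkey : (2 * t - x) / t * Real.log t + (x - t) / t * (Real.log 2 + Real.log t)
      = Real.log t + (x - t) / t * Real.log 2 := by field_simp; ring
  linarith [hkey ▸ h]

lemma aux_slope {E : ℝ} (hE : 0 < E) : E - 1 ≤ E * Real.log E := by
  have h := Real.log_le_sub_one_of_pos (inv_pos.mpr hE)
  rw [Real.log_inv] at h
  have hinv : E * E⁻¹ = 1 := mul_inv_cancel₀ (ne_of_gt hE)
  nlinarith [h, hE]

lemma aux_log32 : (1/3 : ℝ) ≤ Real.log (3/2) := by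
  have h := Real.add_one_le_exp (-(1/3) : ℝ)
  have hxp : Real.exp (1/3 : ℝ) * Real.exp (-(1/3) : ℝ) = 1 := by
    rw [← Real.exp_add]; norm_num
  have hle : Real.exp (1/3 : ℝ) ≤ 3/2 := by nlinarith [Real.exp_pos (1/3 : ℝ)]
  calc (1/3 : ℝ) = Real.log (Real.exp (1/3)) := (Real.log_exp _).symm
    _ ≤ Real.log (3/2) := Real.log_le_log (Real.exp_pos _) hle

-- (♠): (E-1)(E-1+2B) ≤ 2 log E · E · B,  for 2 ≤ B, E ≤ 2B, 2 < E
lemma aux_spade {E B : ℝ} (hB2 : 2 ≤ B) (hE2B : E ≤ 2 * B) (hE2 : 2 < E) :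
    (E - 1) * (E - 1 + 2 * B) ≤ 2 * Real.log E * E * B := by
  have hL : (0.6931471803 : ℝ) < Real.log 2 := Real.log_two_gt_d9
  have hEpos : (0:ℝ) < E := by linarith
  have hslope : E - 1 ≤ E * Real.log E := aux_slope hEpos
  rcases le_or_gt E 4 with h4 | h4
  · -- chord on [2,4]; base point B₀ = 2
    have hch := aux_chord (t := 2) (x := E) (by norm_num) (by linarith) (by linarith)
    -- hch : log 2 + (E-2)/2 * log 2 ≤ log E, i.e. (E/2) log 2 ≤ log E
    have hch' : E / 2 * Real.log 2 ≤ Real.log E := by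
      have : Real.log 2 + (E - 2) / 2 * Real.log 2 = E / 2 * Real.log 2 := by ring
      linarith [this ▸ hch]
    have hbase : (E - 1) * (E + 3) ≤ 2 * Real.log E * E * 2 := by
      nlinarith [hch', hL, sq_nonneg (5 * E - 13), hEpos]
    nlinarith [hbase, mul_le_mul_of_nonneg_right hslope (show (0:ℝ) ≤ 2 * (B - 2) by linarith)]
  · rcases le_or_gt E 8 with h8 | h8
    · -- chord on [4,8]; base point B₀ = E/2
      have hch := aux_chord (t := 4) (x := E) (by norm_num) (by linarith) (by linarith)
      have hlog4 : Real.log (4:ℝ) = 2 * Real.log 2 := by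
        rw [show (4:ℝ) = 2 ^ 2 by norm_num, Real.log_pow]; push_cast; ring
      have hch' : (E + 4) / 4 * Real.log 2 ≤ Real.log E := by
        rw [hlog4] at hch
        have : 2 * Real.log 2 + (E - 4) / 4 * Real.log 2 = (E + 4) / 4 * Real.log 2 := by ring
        linarith [this ▸ hch]
      have hbase : (E - 1) * (2 * E - 1) ≤ Real.log E * E ^ 2 := by
        have hm : (E + 4) / 4 * Real.log 2 * E ^ 2 ≤ Real.log E * E ^ 2 :=
          mul_le_mul_of_nonneg_right hch' (by positivity)
        nlinarith [hm, hL, sq_nonneg (E - 4),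
          mul_nonneg (mul_nonneg (show (0:ℝ) ≤ E - 4 by linarith) (show (0:ℝ) ≤ E - 4 by linarith)) (show (0:ℝ) ≤ E - 4 by linarith)]
      nlinarith [hbase, mul_le_mul_of_nonneg_right hslope (show (0:ℝ) ≤ 2 * B - E by linarith)]
    · -- E > 8 : log E ≥ 3 log 2 > 2
      have hlogE2 : (2:ℝ) ≤ Real.log E := by
        have h1 : Real.log (8:ℝ) ≤ Real.log E := Real.log_le_log (by norm_num) h8.le
        have h2 : Real.log (8:ℝ) = 3 * Real.log 2 := by
          rw [show (8:ℝ) = 2 ^ 3 by norm_num, Real.log_pow]; push_cast; ring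
        linarith
      nlinarith [mul_le_mul_of_nonneg_right hlogE2 (show (0:ℝ) ≤ E * B by positivity),
        mul_nonneg (show (0:ℝ) ≤ 2*B - E by linarith) (show (0:ℝ) ≤ B by linarith)]

lemma aux_diamond (k : ℕ) (hk : 2 ≤ k) {E : ℝ} (h2k : 2*(k:ℝ) < E)
    (hek : E ≤ (k:ℝ) * Real.exp 1) :
    (E - 1) * (E - 1 + 4*(k:ℝ)) ≤ 4*(k:ℝ)*E*Real.log E := by
  have hkR : (2:ℝ) ≤ (k:ℝ) := by exact_mod_cast hk
  have hEpos : (0:ℝ) < E := by linarith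
  have hL : (0.6931471803 : ℝ) < Real.log 2 := Real.log_two_gt_d9
  rcases le_or_gt 3 k with hk3 | hk3
  · have hk3R : (3:ℝ) ≤ (k:ℝ) := by exact_mod_cast hk3
    have h6E : (6:ℝ) ≤ E := by linarith
    have hlog6 : Real.log 6 ≤ Real.log E := Real.log_le_log (by norm_num) h6E
    have hl6 : Real.log (6:ℝ) = 2 * Real.log 2 + Real.log (3/2) := by
      rw [show (6:ℝ) = 2 ^ 2 * (3/2) by norm_num,
        Real.log_mul (by norm_num) (by norm_num), Real.log_pow]
      push_cast; ring
    have hl32 : (1/3 : ℝ) ≤ Real.log (3/2) := by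
      have h := Real.add_one_le_exp (-(1/3) : ℝ)
      have hxp : Real.exp (1/3 : ℝ) * Real.exp (-(1/3) : ℝ) = 1 := by
        rw [← Real.exp_add]; norm_num
      have hle : Real.exp (1/3 : ℝ) ≤ 3/2 := by nlinarith [Real.exp_pos (1/3 : ℝ)]
      calc (1/3 : ℝ) = Real.log (Real.exp (1/3)) := (Real.log_exp _).symm
        _ ≤ Real.log (3/2) := Real.log_le_log (Real.exp_pos _) hle
    have hlogE : (1.7196 : ℝ) ≤ Real.log E := by
      have : (1.7196:ℝ) ≤ 2 * Real.log 2 + Real.log (3/2) := by linarith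
      linarith [hl6 ▸ this]
    have he : Real.exp 1 < 2.7182818286 := Real.exp_one_lt_d9
    have hE4k : E + 4*(k:ℝ) - 2 ≤ 4*(k:ℝ)*Real.log E := by nlinarith
    nlinarith [mul_le_mul_of_nonneg_left hE4k hEpos.le]
  · have hk2 : k = 2 := by omega
    subst hk2
    have hkc : ((2:ℕ):ℝ) = (2:ℝ) := by norm_num
    rw [hkc] at h2k hek ⊢
    -- 4 < E ≤ 2e ; goal : (E-1)(E-1+8) ≤ 8 E log E
    have hlogE : 2 * Real.log 2 ≤ Real.log E := by
      have h1 : Real.log (4:ℝ) ≤ Real.log E := Real.log_le_log (by norm_num) (by linarith)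
      have h2 : Real.log (4:ℝ) = 2 * Real.log 2 := by
        rw [show (4:ℝ) = 2 ^ 2 by norm_num, Real.log_pow]; push_cast; ring
      linarith
    have hegt : (2.7182818283 : ℝ) < Real.exp 1 := Real.exp_one_gt_d9
    have helt : Real.exp 1 < 2.7182818286 := Real.exp_one_lt_d9
    have hLu : Real.log 2 < 0.6931471808 := Real.log_two_lt_d9
    have hcoef : (0:ℝ) ≤ 10 + 2*Real.exp 1 - 16*Real.log 2 := by nlinarith
    have hprod1 : (0:ℝ) ≤ (E - 4) * (2*Real.exp 1 - E) := by
      apply mul_nonneg (by linarith) (by linarith)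
    have hprod2 : (0:ℝ) ≤ (2*Real.exp 1 - E) * (10 + 2*Real.exp 1 - 16*Real.log 2) := by
      apply mul_nonneg (by linarith) hcoef
    have hlin : (E - 1) * (E - 1 + 8) ≤ 16 * Real.log 2 * E := by nlinarith
    nlinarith [mul_le_mul_of_nonneg_left hlogE (show (0:ℝ) ≤ 8*E by linarith)]

lemma regime1_core (k : ℕ) (hk : 2 ≤ k) (E B s ε : ℝ)
    (hε : 0 < ε) (hlogE : Real.log E = ε) (hE1 : 1 < E)
    (hB1 : 1 ≤ B) (hBltm : B < min E (2*(k:ℝ))) (hBgem : min E (2*(k:ℝ)) ≤ 2*B)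
    (hs1 : 1 ≤ s) (hs_ub : s * B < (k:ℝ) + B)
    (hscase : s = 1 ∨ (2 ≤ s ∧ B < (k:ℝ)))
    (hBcase : B = 1 ∨ 2 ≤ B)
    (hek : E ≤ (k:ℝ) * Real.exp 1) :
    (s*E*(E-1+2*B) - 2*(k:ℝ)*(3*E-1)) * (E-1+2*B) ≤ 4*(k:ℝ)*ε*E*(E-B) := by
  have hkR : (2:ℝ) ≤ (k:ℝ) := by exact_mod_cast hk
  have hkpos : (0:ℝ) < (k:ℝ) := by linarith
  have hBpos : (0:ℝ) < B := by linarith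
  have hBE : B ≤ E := le_trans hBltm.le (min_le_left _ _)
  have hB2k : B < 2*(k:ℝ) := lt_of_lt_of_le hBltm (min_le_right _ _)
  have hU : (0:ℝ) < E - 1 + 2*B := by linarith
  have hEpos : (0:ℝ) < E := by linarith
  rcases le_or_gt (s*E) (2*(k:ℝ)) with hA | hA
  · -- case A : s E ≤ 2k ⟹ LHS ≤ 0 ≤ RHS
    have h1 : s*E*(E-1+2*B) ≤ 2*(k:ℝ)*(E-1+2*B) := mul_le_mul_of_nonneg_right hA hU.le
    have h2 : 2*(k:ℝ)*(E-1+2*B) ≤ 2*(k:ℝ)*(3*E-1) := by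
      linarith [mul_nonneg hkpos.le (show (0:ℝ) ≤ E - B by linarith)]
    have h3 : s*E*(E-1+2*B) - 2*(k:ℝ)*(3*E-1) ≤ 0 := by linarith
    have h4 : (s*E*(E-1+2*B) - 2*(k:ℝ)*(3*E-1)) * (E-1+2*B) ≤ 0 :=
      mul_nonpos_of_nonpos_of_nonneg h3 hU.le
    have h5 : (0:ℝ) ≤ 4*(k:ℝ)*ε*E*(E-B) :=
      mul_nonneg (mul_nonneg (mul_nonneg (by positivity) hε.le) hEpos.le) (by linarith)
    linarith
  · rcases hscase with hs_eq | ⟨hs2, hBk⟩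
    · -- s = 1, E > 2k
      subst hs_eq
      have hE2k : 2*(k:ℝ) < E := by nlinarith
      have hmin : min E (2*(k:ℝ)) = 2*(k:ℝ) := min_eq_right (by linarith)
      rw [hmin] at hBltm hBgem
      have hdiamond := aux_diamond k hk hE2k hek
      have h1 : E*(E-1+2*B) - 2*(k:ℝ)*(3*E-1) ≤ (E-1)*(E-2*(k:ℝ)) := by
        linarith [mul_nonneg hEpos.le (show (0:ℝ) ≤ 2*(k:ℝ) - B by linarith)]
      have h2 : (E*(E-1+2*B) - 2*(k:ℝ)*(3*E-1))*(E-1+2*B) ≤ (E-1)*(E-2*(k:ℝ))*(E-1+2*B) :=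
        mul_le_mul_of_nonneg_right h1 hU.le
      have hfac : (0:ℝ) ≤ (E-1)*(E-2*(k:ℝ)) :=
        mul_nonneg (by linarith) (by linarith)
      have h3 : (E-1)*(E-2*(k:ℝ))*(E-1+2*B) ≤ (E-1)*(E-2*(k:ℝ))*(E-1+4*(k:ℝ)) := by
        apply mul_le_mul_of_nonneg_left (by linarith) hfac
      have h4 : (E-1)*(E-2*(k:ℝ))*(E-1+4*(k:ℝ)) ≤ 4*(k:ℝ)*E*Real.log E*(E-2*(k:ℝ)) := by
        linarith [mul_le_mul_of_nonneg_right hdiamond (show (0:ℝ) ≤ E - 2*(k:ℝ) by linarith)]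
      have h5 : 4*(k:ℝ)*E*Real.log E*(E-2*(k:ℝ)) ≤ 4*(k:ℝ)*ε*E*(E-B) := by
        rw [← hlogE]
        linarith [mul_nonneg (mul_nonneg (mul_nonneg hkpos.le (Real.log_nonneg hE1.le))
          hEpos.le) (show (0:ℝ) ≤ 2*(k:ℝ) - B by linarith)]
      linarith [h2, h3, h4, h5]
    · -- s ≥ 2, B < k
      have hE2k : E ≤ 2*(k:ℝ) := by
        by_contra h
        push_neg at h
        have hmin : min E (2*(k:ℝ)) = 2*(k:ℝ) := min_eq_right (by linarith)
        rw [hmin] at hBgem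
        linarith
      have hmin : min E (2*(k:ℝ)) = E := min_eq_left hE2k
      rw [hmin] at hBltm hBgem
      have hsB : s*B < 2*(k:ℝ) := by
        nlinarith [mul_nonneg (show (0:ℝ) ≤ s - 2 by linarith) hBpos.le]
      rcases hBcase with hB_eq | hB2
      · -- B = 1, E ≤ 2
        subst hB_eq
        have hE2 : E ≤ 2 := by linarith
        have hsk : s < (k:ℝ) + 1 := by linarith [hs_ub]
        have hEU : (0:ℝ) ≤ E*(E-1+2*1) := by nlinarith
        have hneg : s*E*(E-1+2*1) - 2*(k:ℝ)*(3*E-1) ≤ -2 := by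
          nlinarith [mul_le_mul_of_nonneg_right hsk.le hEU,
            mul_nonpos_of_nonneg_of_nonpos (show (0:ℝ) ≤ E - 1 by linarith)
              (show E - 2 ≤ 0 by linarith),
            mul_nonneg (show (0:ℝ) ≤ 2*(k:ℝ) - 4 by linarith) hEpos.le,
            mul_nonpos_of_nonneg_of_nonpos (show (0:ℝ) ≤ (k:ℝ) + 1 by linarith)
              (mul_nonpos_of_nonneg_of_nonpos (show (0:ℝ) ≤ E - 1 by linarith)
                (show E - 2 ≤ 0 by linarith))]
        have h4 : (s*E*(E-1+2*1) - 2*(k:ℝ)*(3*E-1)) * (E-1+2*1) ≤ 0 :=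
          mul_nonpos_of_nonpos_of_nonneg (by linarith) (by linarith)
        have h5 : (0:ℝ) ≤ 4*(k:ℝ)*ε*E*(E-1) :=
          mul_nonneg (mul_nonneg (mul_nonneg (by positivity) hε.le) hEpos.le) (by linarith)
        linarith
      · -- B ≥ 2
        have hspade := aux_spade hB2 hBgem (by linarith)
        have hEU : (0:ℝ) ≤ E*(E-1+2*B) := by positivity
        have h1 : B*(s*E*(E-1+2*B) - 2*(k:ℝ)*(3*E-1)) ≤ 2*(k:ℝ)*((E-1)*(E-B)) := by
          linarith [mul_le_mul_of_nonneg_right hsB.le hEU]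
        have h2 : B*((s*E*(E-1+2*B) - 2*(k:ℝ)*(3*E-1))*(E-1+2*B))
            ≤ 2*(k:ℝ)*((E-1)*(E-B))*(E-1+2*B) := by
          calc B*((s*E*(E-1+2*B) - 2*(k:ℝ)*(3*E-1))*(E-1+2*B))
              = (B*(s*E*(E-1+2*B) - 2*(k:ℝ)*(3*E-1)))*(E-1+2*B) := by ring
            _ ≤ 2*(k:ℝ)*((E-1)*(E-B))*(E-1+2*B) := mul_le_mul_of_nonneg_right h1 hU.le
        have h3 : 2*(k:ℝ)*((E-1)*(E-B))*(E-1+2*B) ≤ B*(4*(k:ℝ)*ε*E*(E-B)) := by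
          rw [← hlogE]
          linarith [mul_le_mul_of_nonneg_left hspade
            (show (0:ℝ) ≤ 2*(k:ℝ)*(E-B) by
              apply mul_nonneg (by linarith) (by linarith))]
        have hfinal := le_trans h2 h3
        exact le_of_mul_le_mul_left (by linarith) hBpos

lemma rpow_mono2 {x y : ℝ} (h : x ≤ y) : (2:ℝ)^x ≤ (2:ℝ)^y :=
  (Real.rpow_le_rpow_left_iff one_lt_two).mpr h

lemma rpow_two_two : (2:ℝ)^(2:ℝ) = 4 := by
  rw [show (2:ℝ) = ((2:ℕ):ℝ) from by norm_num, Real.rpow_natCast]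
  norm_num


/-- **Equation (5.6) of the paper:** upper bound on the key entropy of the Hadamard
Response mechanism.  Here `B = 2^{⌈log₂(min{e^ε,2k})⌉−1}`, `b = 2^{⌈log₂(k/B+1)⌉}`,
`K = B·b`, `s = b/2`, and `H^{HR} = log(s e^ε + K − s) − ε e^ε s/(s e^ε + K − s)`. -/
theorem stmt18 (ε : ℝ) (hε : 0 < ε) (k : ℕ) (hk : 2 ≤ k)
    (B b K s HHR : ℝ)
    (hB : B = (2 : ℝ) ^ (⌈Real.logb 2 (min (Real.exp ε) (2 * (k : ℝ)))⌉ - 1))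
    (hb : b = (2 : ℝ) ^ ⌈Real.logb 2 ((k : ℝ) / B + 1)⌉)
    (hK : K = B * b) (hs : s = b / 2)
    (hHHR : HHR = Real.log (s * Real.exp ε + K - s) -
      ε * Real.exp ε * s / (s * Real.exp ε + K - s)) :
    (ε ≤ Real.log k + 1 →
      HHR ≤ Real.log (2 * (k : ℝ) * (3 * Real.exp ε - 1) / Real.exp ε) -
        ε * Real.exp ε / (3 * Real.exp ε - 1)) ∧
    (Real.log k + 1 < ε →
      HHR ≤ Real.log (Real.exp ε + 4 * (k : ℝ) - 1) -
        ε * Real.exp ε / (Real.exp ε + 4 * (k : ℝ) - 1)) := by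
  set E := Real.exp ε with hEdef
  clear_value E
  have hE1 : 1 < E := by
    rw [hEdef, show (1:ℝ) = Real.exp 0 from (Real.exp_zero).symm]
    exact Real.exp_lt_exp.mpr hε
  have hEpos : (0:ℝ) < E := by linarith
  have hlogE : Real.log E = ε := by rw [hEdef, Real.log_exp]
  have hkR : (2:ℝ) ≤ (k:ℝ) := by exact_mod_cast hk
  have hkpos : (0:ℝ) < (k:ℝ) := by linarith
  set m := min E (2*(k:ℝ)) with hmdef
  clear_value m
  have hm1 : 1 < m := by rw [hmdef]; exact lt_min hE1 (by linarith)
  have hmpos : 0 < m := by linarith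
  -- B facts
  have hBr : B = (2:ℝ) ^ (((⌈Real.logb 2 m⌉ : ℤ) : ℝ) - 1) := by
    rw [hB, ← Real.rpow_intCast]; push_cast; ring_nf
  have hc1 : (1:ℤ) ≤ ⌈Real.logb 2 m⌉ := Int.ceil_pos.mpr (Real.logb_pos one_lt_two hm1)
  obtain ⟨hm_le, hm_lt⟩ := two_rpow_ceil_logb hmpos
  have h2B : 2*B = (2:ℝ)^((⌈Real.logb 2 m⌉ : ℝ)) := by
    rw [hBr, Real.rpow_sub two_pos, Real.rpow_one]; ring
  have hBgem : m ≤ 2*B := by rw [h2B]; exact hm_le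
  have hBltm : B < m := by rw [← h2B] at hm_lt; linarith
  have hB1 : 1 ≤ B := by
    have h01 : (2:ℝ)^(0:ℝ) ≤ (2:ℝ)^(((⌈Real.logb 2 m⌉ : ℤ) : ℝ) - 1) := by
      apply rpow_mono2
      have : (1:ℝ) ≤ ((⌈Real.logb 2 m⌉ : ℤ) : ℝ) := by exact_mod_cast hc1
      linarith
    rw [Real.rpow_zero] at h01
    rw [hBr]; exact h01
  have hBpos : (0:ℝ) < B := by linarith
  have hBcase : B = 1 ∨ 2 ≤ B := by
    rcases le_or_gt ⌈Real.logb 2 m⌉ 1 with h | h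
    · left
      have hceq : ⌈Real.logb 2 m⌉ = 1 := le_antisymm h hc1
      rw [hBr, hceq]; norm_num
    · right
      have h12 : (2:ℝ)^(1:ℝ) ≤ (2:ℝ)^(((⌈Real.logb 2 m⌉ : ℤ) : ℝ) - 1) := by
        apply rpow_mono2
        have : (2:ℝ) ≤ ((⌈Real.logb 2 m⌉ : ℤ) : ℝ) := by exact_mod_cast h
        linarith
      rw [Real.rpow_one] at h12
      rw [hBr]; exact h12
  -- b and s facts
  have hxpos : (0:ℝ) < (k:ℝ)/B + 1 := by positivity
  have hx1 : (1:ℝ) < (k:ℝ)/B + 1 := by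
    have : (0:ℝ) < (k:ℝ)/B := by positivity
    linarith
  have hbr : b = (2:ℝ) ^ ((⌈Real.logb 2 ((k:ℝ)/B + 1)⌉ : ℝ)) := by
    rw [hb, ← Real.rpow_intCast]
  have hn1 : (1:ℤ) ≤ ⌈Real.logb 2 ((k:ℝ)/B + 1)⌉ :=
    Int.ceil_pos.mpr (Real.logb_pos one_lt_two hx1)
  obtain ⟨hb_le, hb_lt⟩ := two_rpow_ceil_logb hxpos
  rw [← hbr] at hb_le hb_lt
  have hb2 : 2 ≤ b := by
    have h12 : (2:ℝ)^(1:ℝ) ≤ (2:ℝ)^((⌈Real.logb 2 ((k:ℝ)/B + 1)⌉ : ℝ)) := by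
      apply rpow_mono2
      exact_mod_cast hn1
    rw [Real.rpow_one] at h12
    rw [hbr]; exact h12
  have hs1 : 1 ≤ s := by rw [hs]; linarith
  have hspos : (0:ℝ) < s := by linarith
  have hb2s : b = 2*s := by rw [hs]; ring
  have hfeq : ((k:ℝ)/B + 1)*B = (k:ℝ) + B := by field_simp
  have hs_ub : s*B < (k:ℝ) + B := by
    have h1 : b*B < 2*(((k:ℝ)/B + 1)*B) := by
      have := mul_lt_mul_of_pos_right hb_lt hBpos
      linarith [this]
    rw [hfeq, hb2s] at h1
    linarith
  have hscase : s = 1 ∨ (2 ≤ s ∧ B < (k:ℝ)) := by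
    rcases lt_or_ge ⌈Real.logb 2 ((k:ℝ)/B + 1)⌉ 2 with h | h
    · left
      have hceq : ⌈Real.logb 2 ((k:ℝ)/B + 1)⌉ = 1 := by omega
      rw [hs, hbr, hceq]; norm_num
    · right
      constructor
      · have h22 : (2:ℝ)^(2:ℝ) ≤ (2:ℝ)^((⌈Real.logb 2 ((k:ℝ)/B + 1)⌉ : ℝ)) := by
          apply rpow_mono2
          exact_mod_cast h
        rw [rpow_two_two] at h22
        rw [hs, hbr]; linarith [h22]
      · have hy1 : (1:ℝ) < Real.logb 2 ((k:ℝ)/B + 1) := by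
          have := Int.lt_ceil.mp (show (1:ℤ) < ⌈Real.logb 2 ((k:ℝ)/B + 1)⌉ by omega)
          exact_mod_cast this
        have hgt : (2:ℝ) < (k:ℝ)/B + 1 := by
          have h1 : (2:ℝ)^(1:ℝ) < (2:ℝ)^(Real.logb 2 ((k:ℝ)/B + 1)) :=
            (Real.rpow_lt_rpow_left_iff one_lt_two).mpr hy1
          rw [Real.rpow_one, Real.rpow_logb two_pos (by norm_num) hxpos] at h1
          exact h1
        have hkBval : (k:ℝ)/B*B = (k:ℝ) := div_mul_cancel₀ _ (ne_of_gt hBpos)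
        have h2 : (1:ℝ)*B < (k:ℝ)/B*B := mul_lt_mul_of_pos_right (by linarith) hBpos
        rw [hkBval] at h2
        linarith
  have hU : (0:ℝ) < E - 1 + 2*B := by linarith
  have hU0 : (0:ℝ) < 3*E - 1 := by linarith
  have hDeq : s * E + K - s = s*(E - 1 + 2*B) := by rw [hK, hb2s]; ring
  have hDpos : (0:ℝ) < s*(E - 1 + 2*B) := mul_pos hspos hU
  have hHHR' : HHR = Real.log (s*(E-1+2*B)) - ε*E/(E-1+2*B) := by
    rw [hHHR, hDeq]
    congr 1
    field_simp
  constructor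
  · -- Regime 1
    intro hle
    have hek : E ≤ (k:ℝ) * Real.exp 1 := by
      rw [hEdef]
      calc Real.exp ε ≤ Real.exp (Real.log k + 1) := Real.exp_le_exp.mpr hle
        _ = (k:ℝ) * Real.exp 1 := by rw [Real.exp_add, Real.exp_log hkpos]
    have hBltm' : B < min E (2*(k:ℝ)) := by rw [← hmdef]; exact hBltm
    have hBgem' : min E (2*(k:ℝ)) ≤ 2*B := by rw [← hmdef]; exact hBgem
    have hdagger := regime1_core k hk E B s ε hε hlogE hE1 hB1 hBltm' hBgem' hs1 hs_ub
      hscase hBcase hek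
    have h2k0 : (0:ℝ) < 2*(k:ℝ)*(3*E-1) := by
      apply mul_pos (by linarith) hU0
    have hA2pos : (0:ℝ) < 2*(k:ℝ)*(3*E-1)/E := div_pos h2k0 hEpos
    have hlogdiff : Real.log (s*(E-1+2*B)) - Real.log (2*(k:ℝ)*(3*E-1)/E)
        ≤ ε*E/(E-1+2*B) - ε*E/(3*E-1) := by
      have e1 : Real.log (s*(E-1+2*B)) - Real.log (2*(k:ℝ)*(3*E-1)/E)
          = Real.log ((s*(E-1+2*B))/(2*(k:ℝ)*(3*E-1)/E)) :=
        (Real.log_div (ne_of_gt hDpos) (ne_of_gt hA2pos)).symm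
      have e2 : (s*(E-1+2*B))/(2*(k:ℝ)*(3*E-1)/E) = (s*E*(E-1+2*B))/(2*(k:ℝ)*(3*E-1)) := by
        rw [div_div_eq_mul_div]
        ring
      have e3 := Real.log_le_sub_one_of_pos
        (show (0:ℝ) < (s*E*(E-1+2*B))/(2*(k:ℝ)*(3*E-1)) from
          div_pos (mul_pos (mul_pos hspos hEpos) hU) h2k0)
      have e4 : (s*E*(E-1+2*B))/(2*(k:ℝ)*(3*E-1)) - 1 ≤ ε*E/(E-1+2*B) - ε*E/(3*E-1) := by
        rw [div_sub_one (ne_of_gt h2k0),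
          div_sub_div _ _ (ne_of_gt hU) (ne_of_gt hU0),
          div_le_div_iff₀ h2k0 (mul_pos hU hU0)]
        linarith [mul_le_mul_of_nonneg_right hdagger hU0.le]
      rw [e1, e2]
      linarith
    rw [hHHR']
    linarith
  · -- Regime 2
    intro hlt
    have hekE : (k:ℝ) * Real.exp 1 < E := by
      rw [hEdef]
      calc (k:ℝ) * Real.exp 1 = Real.exp (Real.log k + 1) := by
            rw [Real.exp_add, Real.exp_log hkpos]
        _ < Real.exp ε := Real.exp_lt_exp.mpr hlt
    have he2 : (2:ℝ) < Real.exp 1 := by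
      have := Real.exp_one_gt_d9
      linarith
    have hE2k : 2*(k:ℝ) < E := by nlinarith
    have hmin : m = 2*(k:ℝ) := by rw [hmdef]; exact min_eq_right (by linarith)
    have hBk : (k:ℝ) ≤ B := by rw [hmin] at hBgem; linarith
    have hB2k : B < 2*(k:ℝ) := by rw [hmin] at hBltm; exact hBltm
    have hylt : Real.logb 2 ((k:ℝ)/B + 1) ≤ 1 := by
      rw [← Real.log_div_log, div_le_one (Real.log_pos one_lt_two)]
      apply Real.log_le_log hxpos
      have : (k:ℝ)/B ≤ 1 := (div_le_one hBpos).mpr hBk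
      linarith
    have hceq : ⌈Real.logb 2 ((k:ℝ)/B + 1)⌉ = 1 := by
      have h1 : ⌈Real.logb 2 ((k:ℝ)/B + 1)⌉ ≤ 1 := Int.ceil_le.mpr (by exact_mod_cast hylt)
      omega
    have hseq : s = 1 := by rw [hs, hbr, hceq]; norm_num
    rw [hHHR', hseq, one_mul]
    have hxy : E - 1 + 2*B ≤ E + 4*(k:ℝ) - 1 := by linarith
    exact aux_mono hU hxy (mul_nonneg hε.le hEpos.le)
end
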